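/- arXiv:2307.00780 — 3 statements merged into one kernel-verified Lean document; each statement's English description precedes it below -/
import Mathlib

section
/- Let f: ℝⁿ → ℝ ∪ {+∞} be a proper, lsc, icc function associated with f̄, where dom f is closed, f̄ is lsc on ℝⁿ × dom f, bounded from below on dom f × dom f, and continuous relative to int(dom f) × int(dom f), and let γ_k ↓ 0 with the approximating sequence f^k = g_{γ_k} − h_{γ_k} + δ_{dom f} given by the partial Moreau envelope. Then for every x̄ ∈ int(dom f): ∂_A f(x̄) ⊂ ∂₁f̄(x̄, x̄) − ∂₂(−f̄)(x̄, x̄) and ∂_A^∞ f(x̄) = {0}, where ∂₁f̄(·,x) and ∂₂(−f̄)(z,·) denote the convex subdifferentials of the convex functions f̄(·,x) and (−f̄)(z,·). -/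
open Filter Topology Metric Set
open scoped Pointwise RealInnerProductSpace Classical

noncomputable section

/-- Euclidean space ℝⁿ. -/
abbrev En (n : ℕ) := EuclideanSpace ℝ (Fin n)

/-- Outer limit (Painlevé–Kuratowski upper limit) of a sequence of sets. -/
def OuterLim {α : Type*} [TopologicalSpace α] (C : ℕ → Set α) : Set α :=
  {u | ∃ N : ℕ → ℕ, StrictMono N ∧ ∃ w : ℕ → α, (∀ j, w j ∈ C (N j)) ∧
        Tendsto w atTop (nhds u)}

/-- Horizon outer limit of a sequence of sets. -/
def HorizonLim {α : Type*} [NormedAddCommGroup α] [NormedSpace ℝ α] (C : ℕ → Set α) : Set α :=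
  insert 0 {u | ∃ N : ℕ → ℕ, StrictMono N ∧ ∃ lam : ℕ → ℝ, (∀ j, 0 < lam j) ∧
      Antitone lam ∧ Tendsto lam atTop (nhds 0) ∧ ∃ w : ℕ → α, (∀ j, w j ∈ C (N j)) ∧
      Tendsto (fun j => lam j • w j) atTop (nhds u)}

/-- Convex subdifferential of an extended-real-valued function on ℝⁿ
(empty outside of the effective domain). -/
def eSubdiff {n : ℕ} (g : En n → EReal) (x : En n) : Set (En n) :=
  {v | g x ≠ ⊤ ∧ ∀ y, g x + ((⟪v, y - x⟫ : ℝ) : EReal) ≤ g y}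

/-- Effective domain of an extended-real-valued function on ℝⁿ. -/
def edom {n : ℕ} (f : En n → EReal) : Set (En n) := {x | f x < ⊤}

/-- Properness of an extended-real-valued function on ℝⁿ. -/
def ProperE {n : ℕ} (f : En n → EReal) : Prop := (∃ x, f x < ⊤) ∧ ∀ x, f x ≠ ⊥

/-- Convexity of an extended-real-valued function on ℝⁿ. -/
def EConvexFn {n : ℕ} (g : En n → EReal) : Prop :=
  ∀ x y : En n, ∀ a b : ℝ, 0 ≤ a → 0 ≤ b → a + b = 1 →
    g (a • x + b • y) ≤ (a : EReal) * g x + (b : EReal) * g y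

/-- `fk` is DC on its domain with DC decomposition `g - h`. -/
structure IsDCDecomp {n : ℕ} (fk g h : En n → EReal) : Prop where
  proper_fk : ProperE fk
  proper_g : ProperE g
  lsc_g : LowerSemicontinuous g
  convex_g : EConvexFn g
  proper_h : ProperE h
  lsc_h : LowerSemicontinuous h
  convex_h : EConvexFn h
  dom_eq : edom fk = edom g ∩ edom h
  eq_on : ∀ x ∈ edom fk, fk x = g x - h x

/-- Pointwise convergence of extended-real-valued functions. -/
def PtConv {n : ℕ} (fk : ℕ → En n → EReal) (f : En n → EReal) : Prop :=
  ∀ x, Tendsto (fun k => fk k x) atTop (nhds (f x))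

/-- Epi-convergence of extended-real-valued functions. -/
def EpiConv {n : ℕ} (fk : ℕ → En n → EReal) (f : En n → EReal) : Prop :=
  ∀ x : En n,
    (∀ xk : ℕ → En n, Tendsto xk atTop (nhds x) →
      f x ≤ Filter.liminf (fun k => fk k (xk k)) atTop) ∧
    (∃ xk : ℕ → En n, Tendsto xk atTop (nhds x) ∧
      Filter.limsup (fun k => fk k (xk k)) atTop ≤ f x)

/-- Continuous convergence of extended-real-valued functions. -/
def ContConv {n : ℕ} (fk : ℕ → En n → EReal) (f : En n → EReal) : Prop :=
  ∀ x : En n, ∀ xk : ℕ → En n, Tendsto xk atTop (nhds x) →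
    Tendsto (fun k => fk k (xk k)) atTop (nhds (f x))

/-- The approximate subdifferential of an ADC function, associated with extended-real-valued
DC decomposition sequences `g`, `h`. -/
def eApproxSubdiff {n : ℕ} (g h : ℕ → En n → EReal) (xb : En n) : Set (En n) :=
  {v | ∃ xk : ℕ → En n, Tendsto xk atTop (nhds xb) ∧
        v ∈ OuterLim (fun k => eSubdiff (g k) (xk k) - eSubdiff (h k) (xk k))}

/-- The approximate horizon subdifferential, extended-real-valued decompositions. -/
def eApproxHorSubdiff {n : ℕ} (g h : ℕ → En n → EReal) (xb : En n) : Set (En n) :=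
  {v | ∃ xk : ℕ → En n, Tendsto xk atTop (nhds xb) ∧
        v ∈ HorizonLim (fun k => eSubdiff (g k) (xk k) - eSubdiff (h k) (xk k))}

/-- `f` is implicitly convex-concave (icc) associated with the lifted function `fb`. -/
structure IsICC {n : ℕ} (f : En n → EReal) (fb : En n → En n → EReal) : Prop where
  top_of_not_mem : ∀ z x : En n, z ∉ edom f → fb z x = ⊤
  bot_of_mem : ∀ z x : En n, z ∈ edom f → x ∉ edom f → fb z x = ⊥
  convex_fst : ∀ x ∈ edom f, EConvexFn (fun z => fb z x)
  concave_snd : ∀ z ∈ edom f, EConvexFn (fun x => -(fb z x))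
  diag : ∀ x ∈ edom f, f x = fb x x

/-- The convex part `g_γ(x) = ‖x‖²/(2γ)` of the partial Moreau envelope. -/
def pmeG {n : ℕ} (γ : ℝ) (x : En n) : EReal := ((‖x‖ ^ 2 / (2 * γ) : ℝ) : EReal)

/-- The concave part `h_γ(x) = sup_z {-f̄(z,x) - ‖z‖²/(2γ) + ⟨z,x⟩/γ}` of the partial
Moreau envelope. -/
def pmeH {n : ℕ} (fb : En n → En n → EReal) (γ : ℝ) (x : En n) : EReal :=
  ⨆ z : En n, (-(fb z x) + ((-(‖z‖ ^ 2) / (2 * γ) + ⟪z, x⟫ / γ : ℝ) : EReal))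

/-- The approximating functions `f^k = g_{γ} - h_{γ} + δ_{dom f}`. -/

def pmeFk {n : ℕ} (f : En n → EReal) (fb : En n → En n → EReal) (γ : ℝ) (x : En n) : EReal :=
  if x ∈ edom f then pmeG γ x - pmeH fb γ x else ⊤



section Aux

/-- monotonicity of difference quotients of a convex function along a segment -/
lemma quot_mono {n : ℕ} {ψ : En n → ℝ} {c : En n} {ρ : ℝ}
    (hconv : ∀ p ∈ closedBall c ρ, ∀ q ∈ closedBall c ρ, ∀ a b : ℝ, 0 ≤ a → 0 ≤ b → a + b = 1 →
      ψ (a • p + b • q) ≤ a * ψ p + b * ψ q)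
    {y v : En n} (hy : y ∈ closedBall c ρ) {t t' : ℝ} (ht : 0 < t) (htt' : t ≤ t')
    (hy' : y + t' • v ∈ closedBall c ρ) :
    (ψ (y + t • v) - ψ y) / t ≤ (ψ (y + t' • v) - ψ y) / t' := by
  have ht' : 0 < t' := lt_of_lt_of_le ht htt'
  have h1 : (1 - t / t') • y + (t / t') • (y + t' • v) = y + t • v := by
    have : (t / t') * t' = t := div_mul_cancel₀ t ht'.ne'
    rw [smul_add, smul_smul, this]
    module
  have h2 := hconv y hy (y + t' • v) hy' (1 - t / t') (t / t')
    (by rw [sub_nonneg]; exact div_le_one_of_le₀ htt' ht'.le)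
    (by positivity) (by ring)
  rw [h1] at h2
  have key : ψ (y + t • v) * t' ≤ ((1 - t / t') * ψ y + t / t' * ψ (y + t' • v)) * t' :=
    mul_le_mul_of_nonneg_right h2 ht'.le
  have expand : ((1 - t / t') * ψ y + t / t' * ψ (y + t' • v)) * t' =
      (t' - t) * ψ y + t * ψ (y + t' • v) := by field_simp
  rw [expand] at key
  rw [div_le_div_iff₀ ht ht']
  nlinarith [key]

/-- a convex function bounded on a big ball is Lipschitz on a smaller ball -/
lemma convex_lip {n : ℕ} {ψ : En n → ℝ} {c : En n} {ρ K m : ℝ} (hρ : 0 < ρ)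
    (hconv : ∀ p ∈ closedBall c (2*ρ), ∀ q ∈ closedBall c (2*ρ), ∀ a b : ℝ, 0 ≤ a → 0 ≤ b → a + b = 1 →
      ψ (a • p + b • q) ≤ a * ψ p + b * ψ q)
    (hK : ∀ p ∈ closedBall c (2*ρ), ψ p ≤ K) (hm : ∀ p ∈ closedBall c (2*ρ), m ≤ ψ p) :
    ∀ p ∈ closedBall c ρ, ∀ q ∈ closedBall c ρ, ψ p - ψ q ≤ (K - m)/ρ * ‖p - q‖ := by
  intro p hp q hq
  have hcb : c ∈ closedBall c (2*ρ) := mem_closedBall_self (by positivity)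
  have hKm : 0 ≤ K - m := by linarith [hK c hcb, hm c hcb]
  rcases eq_or_ne p q with rfl | hpq
  · simp
  · have hnorm : 0 < ‖p - q‖ := by
      rw [norm_pos_iff]; exact sub_ne_zero_of_ne hpq
    set u : En n := ‖p - q‖⁻¹ • (p - q) with hu
    set p' : En n := p + ρ • u with hp'
    have hup : ‖u‖ = 1 := by
      rw [hu, norm_smul, norm_inv, norm_norm]
      field_simp
    have hp'mem : p' ∈ closedBall c (2*ρ) := by
      rw [mem_closedBall] at *
      calc dist p' c ≤ dist p' p + dist p c := dist_triangle _ _ _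
        _ ≤ ρ + ρ := by
            refine add_le_add ?_ hp
            rw [dist_eq_norm]
            simp only [hp', add_sub_cancel_left, norm_smul, hup, Real.norm_eq_abs,
              abs_of_pos hρ]
            simp
        _ = 2*ρ := by ring
    set a : ℝ := ‖p - q‖ / (‖p - q‖ + ρ) with ha
    set b : ℝ := ρ / (‖p - q‖ + ρ) with hb
    have hab : a + b = 1 := by
      rw [ha, hb, ← add_div, div_self (by positivity)]
    have hcomb : a • p' + b • q = p := by
      rw [hp', hu]
      have h1 : a * (ρ * ‖p - q‖⁻¹) = b := by
        rw [ha, hb]; field_simp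
      rw [smul_add, smul_smul, smul_smul, mul_assoc, h1, smul_sub]
      have h2 : a • p + (b • p - b • q) + b • q = (a+b) • p := by rw [add_smul]; abel
      rw [h2, hab, one_smul]
    have hqm : q ∈ closedBall c (2*ρ) := closedBall_subset_closedBall (by linarith) hq
    have h2 := hconv p' hp'mem q hqm a b (by positivity) (by positivity) hab
    rw [hcomb] at h2
    have hb1 : b = 1 - a := by linarith
    rw [hb1] at h2
    have ha0 : 0 ≤ a := by positivity
    have h6 : ψ p' - ψ q ≤ K - m := by linarith [hK p' hp'mem, hm q hqm]
    have h5 : a * (ψ p' - ψ q) ≤ a * (K - m) := mul_le_mul_of_nonneg_left h6 ha0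
    have key : ψ p - ψ q ≤ a * (K - m) := by nlinarith [h5, h2]
    calc ψ p - ψ q ≤ a * (K - m) := key
      _ ≤ (‖p - q‖ / ρ) * (K - m) := by
          refine mul_le_mul_of_nonneg_right ?_ hKm
          rw [ha, div_le_div_iff₀ (by positivity) hρ]
          nlinarith [hnorm]
      _ = (K - m)/ρ * ‖p - q‖ := by ring

/-- existence of a subgradient for a convex Lipschitz function at an interior point -/
lemma exists_subgrad {n : ℕ} {ψ : En n → ℝ} {c : En n} {ρ lam : ℝ} (hρ : 0 < ρ) (hlam : 0 ≤ lam)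
    (hconv : ∀ p ∈ closedBall c ρ, ∀ q ∈ closedBall c ρ, ∀ a b : ℝ, 0 ≤ a → 0 ≤ b → a + b = 1 →
      ψ (a • p + b • q) ≤ a * ψ p + b * ψ q)
    (hlip : ∀ p ∈ closedBall c ρ, ∀ q ∈ closedBall c ρ, ψ p - ψ q ≤ lam * ‖p - q‖)
    {y : En n} (hy : y ∈ ball c (ρ/2)) :
    ∃ s : En n, ‖s‖ ≤ lam ∧ ∀ q ∈ closedBall c ρ, ψ y + ⟪s, q - y⟫ ≤ ψ q := by
  have hyc : y ∈ closedBall c ρ := ball_subset_closedBall (ball_subset_ball (by linarith) hy)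
  -- admissible step sizes
  have hadm : ∀ (v : En n) (t : ℝ), 0 < t → t * ‖v‖ ≤ ρ/2 → y + t • v ∈ closedBall c ρ := by
    intro v t ht htv
    rw [mem_closedBall]
    calc dist (y + t • v) c ≤ dist (y + t • v) y + dist y c := dist_triangle _ _ _
      _ ≤ ρ/2 + ρ/2 := by
          refine add_le_add ?_ (le_of_lt (by simpa [mem_ball] using hy))
          rw [dist_eq_norm, add_sub_cancel_left, norm_smul, Real.norm_eq_abs, abs_of_pos ht]
          exact htv
      _ = ρ := by ring
  -- difference quotient
  set quot : En n → ℝ → ℝ := fun v t => (ψ (y + t • v) - ψ y) / t with hquot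
  set T : En n → Set ℝ := fun v => {t : ℝ | 0 < t ∧ t * ‖v‖ ≤ ρ/2} with hT
  have hTne : ∀ v, ((ρ/2)/(‖v‖ + 1)) ∈ T v := by
    intro v
    have h1 : 0 < ‖v‖ + 1 := by positivity
    constructor
    · positivity
    · rw [div_mul_eq_mul_div, div_le_iff₀ h1]
      nlinarith [norm_nonneg v, hρ]
  have hquot_ge : ∀ v, ∀ t ∈ T v, -(lam * ‖v‖) ≤ quot v t := by
    intro v t htT
    obtain ⟨ht, htv⟩ := htT
    have hmem := hadm v t ht htv
    have h2 : ψ y - ψ (y + t • v) ≤ lam * (t * ‖v‖) := by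
      calc ψ y - ψ (y + t • v) ≤ lam * ‖y - (y + t • v)‖ := hlip y hyc _ hmem
        _ = lam * (t * ‖v‖) := by
            rw [show y - (y + t • v) = -(t • v) by abel, norm_neg, norm_smul,
              Real.norm_eq_abs, abs_of_pos ht]
    show -(lam * ‖v‖) ≤ (ψ (y + t • v) - ψ y) / t
    rw [le_div_iff₀ ht]
    nlinarith [h2]
  have hquot_le : ∀ v, ∀ t ∈ T v, quot v t ≤ lam * ‖v‖ := by
    intro v t ⟨ht, htv⟩
    have hmem := hadm v t ht htv
    have h2 : ψ (y + t • v) - ψ y ≤ lam * (t * ‖v‖) := by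
      calc ψ (y + t • v) - ψ y ≤ lam * ‖(y + t • v) - y‖ := hlip _ hmem y hyc
        _ = lam * (t * ‖v‖) := by
            rw [add_sub_cancel_left, norm_smul, Real.norm_eq_abs, abs_of_pos ht]
    rw [hquot, div_le_iff₀ ht]
    nlinarith [h2]
  have hbdd : ∀ v, BddBelow (quot v '' T v) := by
    intro v
    exact ⟨-(lam * ‖v‖), fun x ⟨t, htT, hxt⟩ => hxt ▸ hquot_ge v t htT⟩
  set N : En n → ℝ := fun v => sInf (quot v '' T v) with hN
  have hNne : ∀ v, (quot v '' T v).Nonempty := fun v => ⟨_, _, hTne v, rfl⟩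
  have hNle : ∀ v, ∀ t ∈ T v, N v ≤ quot v t := fun v t ht => csInf_le (hbdd v) ⟨t, ht, rfl⟩
  have hNge : ∀ v, -(lam * ‖v‖) ≤ N v := fun v =>
    le_csInf (hNne v) (fun x ⟨t, htT, hxt⟩ => hxt ▸ hquot_ge v t htT)
  have hNub : ∀ v, N v ≤ lam * ‖v‖ := fun v =>
    csInf_le_of_le (hbdd v) ⟨_, hTne v, rfl⟩ (hquot_le v _ (hTne v))
  -- quotient monotone
  have hmono : ∀ v, ∀ t ∈ T v, ∀ t' ∈ T v, t ≤ t' → quot v t ≤ quot v t' := by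
    intro v t ht t' ht' htt'
    exact quot_mono hconv hyc ht.1 htt' (hadm v t' ht'.1 ht'.2)
  -- positive homogeneity
  have hhom : ∀ a : ℝ, 0 < a → ∀ v, N (a • v) = a * N v := by
    intro a ha v
    have key : ∀ t, t ∈ T (a • v) ↔ a * t ∈ T v := by
      intro t
      simp only [hT, mem_setOf_eq, norm_smul, Real.norm_eq_abs, abs_of_pos ha]
      constructor
      · rintro ⟨ht, htv⟩
        exact ⟨mul_pos ha ht, by nlinarith⟩
      · rintro ⟨ht, htv⟩
        exact ⟨by nlinarith, by nlinarith⟩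
    have keyq : ∀ t, 0 < t → quot (a • v) t = a * quot v (a * t) := by
      intro t ht
      show (ψ (y + t • (a • v)) - ψ y)/t = a * ((ψ (y + (a*t) • v) - ψ y)/(a*t))
      rw [smul_smul, mul_comm t a]
      field_simp
    apply le_antisymm
    · rw [show a * N v = sInf ((fun x => a * x) '' (quot v '' T v)) from ?_]
      · apply le_csInf ((hNne v).image _)
        rintro x ⟨q, ⟨t, htT, rfl⟩, rfl⟩
        have htT' : (t / a) ∈ T (a • v) := by
          rw [key]
          rwa [mul_div_cancel₀ _ ha.ne']
        calc N (a • v) ≤ quot (a • v) (t/a) := hNle _ _ htT'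
          _ = a * quot v (a * (t/a)) := keyq _ (div_pos htT.1 ha)
          _ = a * quot v t := by rw [mul_div_cancel₀ _ ha.ne']
      · have himg : (fun x => a * x) '' (quot v '' T v) = a • (quot v '' T v) := by
          ext x
          simp [Set.mem_smul_set, smul_eq_mul]
        rw [himg, Real.sInf_smul_of_nonneg ha.le]
        rfl
    · apply le_csInf (hNne (a • v))
      rintro x ⟨t, htT, rfl⟩
      rw [keyq t htT.1]
      have : N v ≤ quot v (a * t) := hNle v _ ((key t).mp htT)
      nlinarith [this]
  -- subadditivity
  have hadd : ∀ v w : En n, N (v + w) ≤ N v + N w := by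
    intro v w
    have : ∀ ε : ℝ, 0 < ε → N (v + w) ≤ N v + N w + ε := by
      intro ε hε
      obtain ⟨q1, ⟨t1, ht1, rfl⟩, hq1⟩ := exists_lt_of_csInf_lt (hNne v) (by
        show N v < N v + ε/2; linarith)
      obtain ⟨q2, ⟨t2, ht2, rfl⟩, hq2⟩ := exists_lt_of_csInf_lt (hNne w) (by
        show N w < N w + ε/2; linarith)
      set t := min t1 t2 / 2 with htdef
      have ht0 : 0 < t := div_pos (lt_min ht1.1 ht2.1) two_pos
      have h2t1 : 2 * t ≤ t1 := by
        calc 2 * t = min t1 t2 := by rw [htdef]; ring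
          _ ≤ t1 := min_le_left _ _
      have h2t2 : 2 * t ≤ t2 := by
        calc 2 * t = min t1 t2 := by rw [htdef]; ring
          _ ≤ t2 := min_le_right _ _
      have h2tv : 2 * t ∈ T v := ⟨by positivity, le_trans
        (mul_le_mul_of_nonneg_right h2t1 (norm_nonneg v)) ht1.2⟩
      have h2tw : 2 * t ∈ T w := ⟨by positivity, le_trans
        (mul_le_mul_of_nonneg_right h2t2 (norm_nonneg w)) ht2.2⟩
      have htvw : t ∈ T (v + w) := by
        refine ⟨ht0, ?_⟩
        calc t * ‖v + w‖ ≤ t * (‖v‖ + ‖w‖) := by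
              exact mul_le_mul_of_nonneg_left (norm_add_le v w) ht0.le
          _ = (2*t*‖v‖)/2 + (2*t*‖w‖)/2 := by ring
          _ ≤ (ρ/2)/2 + (ρ/2)/2 := by
              have := h2tv.2; have := h2tw.2; linarith
          _ = ρ/2 := by ring
      have hsplit : quot (v+w) t ≤ quot v (2*t) + quot w (2*t) := by
        have hmem1 := hadm v (2*t) (by positivity) h2tv.2
        have hmem2 := hadm w (2*t) (by positivity) h2tw.2
        have hcomb : (1/2 : ℝ) • (y + (2*t) • v) + (1/2 : ℝ) • (y + (2*t) • w)
            = y + t • (v + w) := by module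
        have h3 := hconv _ hmem1 _ hmem2 (1/2) (1/2) (by norm_num) (by norm_num) (by norm_num)
        rw [hcomb] at h3
        rw [hquot]
        simp only
        rw [← add_div, div_le_div_iff₀ ht0 (by positivity : (0:ℝ) < 2*t)]
        nlinarith [h3]
      calc N (v + w) ≤ quot (v+w) t := hNle _ _ htvw
        _ ≤ quot v (2*t) + quot w (2*t) := hsplit
        _ ≤ quot v t1 + quot w t2 := add_le_add
            (hmono v _ h2tv _ ht1 h2t1) (hmono w _ h2tw _ ht2 h2t2)
        _ ≤ N v + N w + ε := by linarith
    by_contra hcon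
    push_neg at hcon
    obtain ⟨ε, hε, hlt⟩ : ∃ ε > 0, N v + N w + ε < N (v + w) :=
      ⟨(N (v+w) - (N v + N w))/2, by linarith, by linarith⟩
    linarith [this ε hε]
  -- Hahn-Banach
  have hN0 : N 0 = 0 := by
    have h1 : ∀ t ∈ T (0 : En n), quot 0 t = 0 := by
      intro t ht
      rw [hquot]; simp
    apply le_antisymm
    · exact le_trans (hNle 0 _ (hTne 0)) (le_of_eq (h1 _ (hTne 0)))
    · apply le_csInf (hNne 0)
      rintro x ⟨t, htT, rfl⟩
      exact le_of_eq (h1 t htT).symm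
  obtain ⟨g, -, hg⟩ := exists_extension_of_le_sublinear ⟨⊥, 0⟩ N
    (fun c hc x => hhom c hc x) hadd (by
      rintro ⟨x, hx⟩
      simp only [Submodule.mem_bot] at hx
      subst hx
      simp [hN0])
  set s : En n := (InnerProductSpace.toDual ℝ (En n)).symm
    (LinearMap.toContinuousLinearMap g) with hs
  have hsg : ∀ v, ⟪s, v⟫ = g v := by
    intro v
    rw [hs, InnerProductSpace.toDual_symm_apply]
    rfl
  have hsle : ∀ v, ⟪s, v⟫ ≤ lam * ‖v‖ := fun v => le_trans ((hsg v) ▸ hg v) (hNub v)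
  refine ⟨s, ?_, ?_⟩
  · rcases eq_or_lt_of_le (norm_nonneg s) with h0 | h0
    · rw [← h0]; exact hlam
    · have := hsle s
      rw [real_inner_self_eq_norm_sq] at this
      nlinarith [this]
  · intro q hq
    set v := q - y with hv
    have h1 : ⟪s, v⟫ ≤ N v := (hsg v) ▸ hg v
    rcases eq_or_ne v 0 with h0 | h0
    · rw [h0]
      simp [inner_zero_right]
      have : q = y := by rwa [hv, sub_eq_zero] at h0
      rw [this]
    · -- N v ≤ ψ q - ψ y via quotient monotonicity up to t = 1
      set t0 := min ((ρ/2)/(‖v‖ + 1)) 1 with ht0def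
      have ht0T : t0 ∈ T v := by
        constructor
        · have h1 : (0:ℝ) < (ρ/2)/(‖v‖+1) := by positivity
          rw [ht0def]
          exact lt_min h1 one_pos
        · calc t0 * ‖v‖ ≤ ((ρ/2)/(‖v‖+1)) * ‖v‖ :=
              mul_le_mul_of_nonneg_right (min_le_left _ _) (norm_nonneg v)
            _ ≤ ρ/2 := (hTne v).2
      have hyv : y + (1:ℝ) • v ∈ closedBall c ρ := by
        rw [one_smul, hv]
        simpa using hq
      have hquot1 : quot v t0 ≤ (ψ (y + (1:ℝ) • v) - ψ y) / 1 :=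
        quot_mono hconv hyc ht0T.1 (min_le_right _ _) hyv
      have : N v ≤ ψ q - ψ y := by
        calc N v ≤ quot v t0 := hNle v t0 ht0T
          _ ≤ (ψ (y + (1:ℝ) • v) - ψ y) / 1 := hquot1
          _ = ψ q - ψ y := by rw [one_smul, hv]; simp
      linarith [le_trans h1 this]

structure Setup (n : ℕ) where
  f : En n → EReal
  fb : En n → En n → EReal
  xb : En n
  r : ℝ
  c : ℝ
  M : ℝ
  hr : 0 < r
  hfb_eq : ∀ z ∈ closedBall xb (4*r), ∀ x ∈ closedBall xb (4*r),
    fb z x = (((fb z x).toReal : ℝ) : EReal)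
  hFlb : ∀ z ∈ closedBall xb (4*r), ∀ x ∈ closedBall xb (4*r), c - 1 ≤ (fb z x).toReal
  hFub : ∀ z ∈ closedBall xb (4*r), ∀ x ∈ closedBall xb (4*r), (fb z x).toReal ≤ c + 1
  hcc : fb xb xb = ((c : ℝ) : EReal)
  hdom : closedBall xb (4*r) ⊆ edom f
  hMd : ∀ z ∈ edom f, ∀ x ∈ edom f, ((M : ℝ) : EReal) ≤ fb z x
  htop : ∀ z x, z ∉ edom f → fb z x = ⊤
  hbot : ∀ z x, z ∈ edom f → x ∉ edom f → fb z x = ⊥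
  hMc : M ≤ c - 1
  hcvz : ∀ x ∈ edom f, EConvexFn (fun z => fb z x)
  hccx : ∀ z ∈ edom f, EConvexFn (fun x => -(fb z x))
  hcont : ContinuousOn (fun p : En n × En n => fb p.1 p.2)
    (interior (edom f) ×ˢ interior (edom f))
  hint : closedBall xb (4*r) ⊆ interior (edom f)

namespace Setup
variable {n : ℕ} (S : Setup n)

def F : En n → En n → ℝ := fun z x => (S.fb z x).toReal
def L : ℝ := 1 / S.r
def gmax : ℝ := min (S.r^2 / (2*(S.c + 2 - S.M)))
  (min (1/2) (min (S.r/4) (S.r/(4*(2*S.L+1)))))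

lemma hL : 0 < S.L := by
  have := S.hr
  rw [L]; positivity

lemma hcM : 0 < S.c + 2 - S.M := by linarith [S.hMc]

lemma gmax_pos : 0 < S.gmax := by
  have h1 := S.hr
  have h2 := S.hcM
  have h3 := S.hL
  rw [gmax]
  refine lt_min (by positivity) (lt_min (by norm_num) (lt_min (by positivity) (by positivity)))

lemma gmax_le_half : S.gmax ≤ 1/2 := le_trans (min_le_right _ _) (min_le_left _ _)
lemma gmax_le_r4 : S.gmax ≤ S.r/4 :=
  le_trans (min_le_right _ _) (le_trans (min_le_right _ _) (min_le_left _ _))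
lemma gmax_le_rL : S.gmax ≤ S.r/(4*(2*S.L+1)) :=
  le_trans (min_le_right _ _) (le_trans (min_le_right _ _) (min_le_right _ _))
lemma gmax_le_rM : S.gmax ≤ S.r^2 / (2*(S.c + 2 - S.M)) := min_le_left _ _

lemma hcc' : S.F S.xb S.xb = S.c := by
  rw [F, S.hcc]; exact EReal.toReal_coe _

lemma ne_top_of_cb4 {z x : En n} (hz : z ∈ closedBall S.xb (4*S.r))
    (hx : x ∈ closedBall S.xb (4*S.r)) : S.fb z x ≠ ⊤ := by
  rw [S.hfb_eq z hz x hx]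
  exact EReal.coe_ne_top _

lemma mem_edom_of_cb4 {z : En n} (hz : z ∈ closedBall S.xb (4*S.r)) : z ∈ edom S.f :=
  S.hdom hz

/-- real convexity of F in the first variable -/
lemma Fconvz {x : En n} (hx : x ∈ closedBall S.xb (4*S.r)) :
    ∀ z₁ ∈ closedBall S.xb (4*S.r), ∀ z₂ ∈ closedBall S.xb (4*S.r),
    ∀ a b : ℝ, 0 ≤ a → 0 ≤ b → a + b = 1 →
    S.F (a • z₁ + b • z₂) x ≤ a * S.F z₁ x + b * S.F z₂ x := by
  intro z₁ hz₁ z₂ hz₂ a b ha hb hab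
  have hmem : a • z₁ + b • z₂ ∈ closedBall S.xb (4*S.r) :=
    (convex_closedBall S.xb (4*S.r)) hz₁ hz₂ ha hb hab
  have h := S.hcvz x (S.hdom hx) z₁ z₂ a b ha hb hab
  simp only at h
  rw [S.hfb_eq _ hmem _ hx, S.hfb_eq _ hz₁ _ hx, S.hfb_eq _ hz₂ _ hx] at h
  rw [show ((a:ℝ):EReal) * (((S.fb z₁ x).toReal : ℝ) : EReal) =
    (((a * (S.fb z₁ x).toReal : ℝ)) : EReal) from (EReal.coe_mul _ _).symm] at h
  rw [show ((b:ℝ):EReal) * (((S.fb z₂ x).toReal : ℝ) : EReal) =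
    (((b * (S.fb z₂ x).toReal : ℝ)) : EReal) from (EReal.coe_mul _ _).symm] at h
  rw [← EReal.coe_add] at h
  exact EReal.coe_le_coe_iff.mp h

/-- real concavity of F in the second variable -/
lemma Fconcx {z : En n} (hz : z ∈ closedBall S.xb (4*S.r)) :
    ∀ x₁ ∈ closedBall S.xb (4*S.r), ∀ x₂ ∈ closedBall S.xb (4*S.r),
    ∀ a b : ℝ, 0 ≤ a → 0 ≤ b → a + b = 1 →
    -(S.F z (a • x₁ + b • x₂)) ≤ a * (-(S.F z x₁)) + b * (-(S.F z x₂)) := by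
  intro x₁ hx₁ x₂ hx₂ a b ha hb hab
  have hmem : a • x₁ + b • x₂ ∈ closedBall S.xb (4*S.r) :=
    (convex_closedBall S.xb (4*S.r)) hx₁ hx₂ ha hb hab
  have h := S.hccx z (S.hdom hz) x₁ x₂ a b ha hb hab
  simp only at h
  rw [S.hfb_eq _ hz _ hmem, S.hfb_eq _ hz _ hx₁, S.hfb_eq _ hz _ hx₂] at h
  rw [← EReal.coe_neg, ← EReal.coe_neg, ← EReal.coe_neg] at h
  rw [show ((a:ℝ):EReal) * (((-(S.fb z x₁).toReal : ℝ)) : EReal) =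
    (((a * (-(S.fb z x₁).toReal) : ℝ)) : EReal) from (EReal.coe_mul _ _).symm] at h
  rw [show ((b:ℝ):EReal) * (((-(S.fb z x₂).toReal : ℝ)) : EReal) =
    (((b * (-(S.fb z x₂).toReal) : ℝ)) : EReal) from (EReal.coe_mul _ _).symm] at h
  rw [← EReal.coe_add] at h
  exact EReal.coe_le_coe_iff.mp h

/-- Lipschitz property of F in the first variable on the ball of radius 2r -/
lemma FLipz {x : En n} (hx : x ∈ closedBall S.xb (4*S.r)) :
    ∀ z₁ ∈ closedBall S.xb (2*S.r), ∀ z₂ ∈ closedBall S.xb (2*S.r),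
    S.F z₁ x - S.F z₂ x ≤ S.L * ‖z₁ - z₂‖ := by
  intro z₁ hz₁ z₂ hz₂
  have h := convex_lip (n := n) (ψ := fun z => S.F z x) (c := S.xb) (ρ := 2*S.r)
    (K := S.c + 1) (m := S.c - 1) (by linarith [S.hr])
    (by
      intro p hp q hq a b ha hb hab
      rw [show 2*(2*S.r) = 4*S.r by ring] at hp hq
      exact S.Fconvz hx p hp q hq a b ha hb hab)
    (by
      intro p hp
      rw [show 2*(2*S.r) = 4*S.r by ring] at hp
      exact S.hFub p hp x hx)
    (by
      intro p hp
      rw [show 2*(2*S.r) = 4*S.r by ring] at hp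
      exact S.hFlb p hp x hx)
    z₁ hz₁ z₂ hz₂
  calc S.F z₁ x - S.F z₂ x ≤ ((S.c+1) - (S.c-1))/(2*S.r) * ‖z₁ - z₂‖ := h
    _ = S.L * ‖z₁ - z₂‖ := by
        rw [L]
        congr 1
        field_simp
        ring

/-- Lipschitz property of F in the second variable on the ball of radius 2r -/
lemma FLipx {z : En n} (hz : z ∈ closedBall S.xb (4*S.r)) :
    ∀ x₁ ∈ closedBall S.xb (2*S.r), ∀ x₂ ∈ closedBall S.xb (2*S.r),
    S.F z x₁ - S.F z x₂ ≤ S.L * ‖x₁ - x₂‖ := by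
  intro x₁ hx₁ x₂ hx₂
  have h := convex_lip (n := n) (ψ := fun q => -(S.F z q)) (c := S.xb) (ρ := 2*S.r)
    (K := -(S.c - 1)) (m := -(S.c + 1)) (by linarith [S.hr])
    (by
      intro p hp q hq a b ha hb hab
      rw [show 2*(2*S.r) = 4*S.r by ring] at hp hq
      exact S.Fconcx hz p hp q hq a b ha hb hab)
    (by
      intro p hp
      rw [show 2*(2*S.r) = 4*S.r by ring] at hp
      exact neg_le_neg (S.hFlb z hz p hp))
    (by
      intro p hp
      rw [show 2*(2*S.r) = 4*S.r by ring] at hp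
      exact neg_le_neg (S.hFub z hz p hp))
    x₂ hx₂ x₁ hx₁
  calc S.F z x₁ - S.F z x₂ = (-(S.F z x₂)) - (-(S.F z x₁)) := by ring
    _ ≤ ((-(S.c-1)) - (-(S.c+1)))/(2*S.r) * ‖x₂ - x₁‖ := h
    _ = S.L * ‖x₁ - x₂‖ := by
        rw [L, norm_sub_rev]
        congr 1
        field_simp
        ring

lemma inner_id (z x : En n) {γ : ℝ} (hγ : 0 < γ) :
    (-(‖z‖^2)/(2*γ) + ⟪z,x⟫/γ : ℝ) = ‖x‖^2/(2*γ) - ‖z-x‖^2/(2*γ) := by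
  have h := norm_sub_sq_real z x
  rw [h]
  ring

lemma HLB (γ : ℝ) (hγ : 0 < γ) {x : En n} (hx : x ∈ closedBall S.xb (S.r/2)) :
    ((-(S.F x x) + ‖x‖^2/(2*γ) : ℝ) : EReal) ≤ pmeH S.fb γ x := by
  have hx4 : x ∈ closedBall S.xb (4*S.r) :=
    closedBall_subset_closedBall (by linarith [S.hr]) hx
  have h := le_iSup (fun z => -(S.fb z x) +
    ((-(‖z‖^2)/(2*γ) + ⟪z,x⟫/γ : ℝ) : EReal)) x
  refine le_trans (le_of_eq ?_) h
  show ((-(S.F x x) + ‖x‖^2/(2*γ) : ℝ) : EReal) =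
    -(S.fb x x) + ((-(‖x‖^2)/(2*γ) + ⟪x,x⟫/γ : ℝ) : EReal)
  have h2 : (-(‖x‖^2)/(2*γ) + ⟪x,x⟫/γ : ℝ) = ‖x‖^2/(2*γ) := by
    rw [real_inner_self_eq_norm_sq]
    ring
  rw [h2, S.hfb_eq x hx4 x hx4, ← EReal.coe_neg, ← EReal.coe_add]
  rfl

lemma HUB (γ : ℝ) (hγ0 : 0 < γ) (hγ : γ ≤ S.gmax) {x : En n}
    (hx : x ∈ closedBall S.xb (S.r/2)) :
    pmeH S.fb γ x ≤ ((-(S.F x x) + S.L^2*γ/2 + ‖x‖^2/(2*γ) : ℝ) : EReal) := by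
  have hr := S.hr
  have hx4 : x ∈ closedBall S.xb (4*S.r) :=
    closedBall_subset_closedBall (by linarith) hx
  refine iSup_le ?_
  intro z
  by_cases hzdom : z ∈ edom S.f
  · by_cases hztop : S.fb z x = ⊤
    · rw [hztop]
      simp only [EReal.neg_top, EReal.bot_add]
      exact bot_le
    · have hxdom : x ∈ edom S.f := S.hdom hx4
      have hMle : ((S.M : ℝ) : EReal) ≤ S.fb z x := S.hMd z hzdom x hxdom
      have hznb : S.fb z x ≠ ⊥ := fun h => by simp [h] at hMle
      set β := (S.fb z x).toReal with hβdef
      have hβ : S.fb z x = ((β : ℝ) : EReal) := (EReal.coe_toReal hztop hznb).symm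
      have hMβ : S.M ≤ β := by
        rw [hβ] at hMle
        exact EReal.coe_le_coe_iff.mp hMle
      rw [hβ, ← EReal.coe_neg, ← EReal.coe_add]
      rw [EReal.coe_le_coe_iff]
      rw [inner_id z x hγ0]
      set s := ‖z - x‖ with hs
      have hs0 : 0 ≤ s := norm_nonneg _
      have hFxub : S.F x x ≤ S.c + 1 := S.hFub x hx4 x hx4
      by_cases hnear : s ≤ S.r
      · have hz2 : z ∈ closedBall S.xb (2*S.r) := by
          rw [mem_closedBall, dist_eq_norm]
          calc ‖z - S.xb‖ ≤ ‖z - x‖ + ‖x - S.xb‖ := norm_sub_le_norm_sub_add_norm_sub z x S.xb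
            _ ≤ S.r + S.r/2 := by
                refine add_le_add hnear ?_
                rw [← dist_eq_norm]
                exact hx
            _ ≤ 2*S.r := by linarith
      -- F x x - F z x ≤ L * ‖x - z‖
        have hlip := S.FLipz hx4 x (closedBall_subset_closedBall (by linarith) hx) z hz2
        have hβF : β = S.F z x := rfl
        have hLpos := S.hL
        have hnrev : ‖x - z‖ = s := by rw [hs, norm_sub_rev]
        rw [hnrev] at hlip
        have hD : S.L*s - S.L^2*γ/2 ≤ s^2/(2*γ) := by
          rw [sub_le_iff_le_add, div_add' _ _ _ (by linarith : (2*γ) ≠ 0),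
            le_div_iff₀ (by linarith : (0:ℝ) < 2*γ)]
          nlinarith [sq_nonneg (s - S.L*γ)]
        linarith [hlip, hD]
      · push_neg at hnear
        have h2γM : 2*γ*(S.c + 2 - S.M) ≤ S.r^2 := by
          have h1 := S.gmax_le_rM
          have h2 := S.hcM
          rw [le_div_iff₀ (by linarith)] at h1
          nlinarith [h1, mul_le_mul_of_nonneg_right hγ
            (show (0:ℝ) ≤ 2*(S.c+2-S.M) by linarith)]
        have hs2 : S.r^2 ≤ s^2 := by nlinarith
        have hd : S.c + 2 - S.M ≤ S.r^2/(2*γ) := by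
          rw [le_div_iff₀ (by linarith)]
          nlinarith
        have h5 : S.r^2/(2*γ) ≤ s^2/(2*γ) := by gcongr
        have hL2 : 0 ≤ S.L^2*γ/2 := by positivity
        linarith [hd, h5, hFxub, hMβ]
  · rw [S.htop z x hzdom]
    simp only [EReal.neg_top, EReal.bot_add]
    exact bot_le

lemma HReal (γ : ℝ) (hγ0 : 0 < γ) (hγ : γ ≤ S.gmax) {x : En n}
    (hx : x ∈ closedBall S.xb (S.r/2)) :
    ∃ H : ℝ, pmeH S.fb γ x = ((H : ℝ) : EReal) ∧
      -(S.F x x) + ‖x‖^2/(2*γ) ≤ H ∧ H ≤ -(S.F x x) + S.L^2*γ/2 + ‖x‖^2/(2*γ) := by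
  have h1 := S.HLB γ hγ0 hx
  have h2 := S.HUB γ hγ0 hγ hx
  have hnt : pmeH S.fb γ x ≠ ⊤ := by
    intro h
    rw [h] at h2
    exact (EReal.coe_ne_top _) (top_le_iff.mp h2)
  have hnb : pmeH S.fb γ x ≠ ⊥ := by
    intro h
    rw [h] at h1
    exact (EReal.coe_ne_bot _) (le_bot_iff.mp h1)
  refine ⟨(pmeH S.fb γ x).toReal, (EReal.coe_toReal hnt hnb).symm, ?_, ?_⟩
  · exact EReal.coe_le_coe_iff.mp (by rwa [EReal.coe_toReal hnt hnb])
  · exact EReal.coe_le_coe_iff.mp (by rwa [EReal.coe_toReal hnt hnb])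

/-- near-maximizer of the supremum defining `pmeH` -/
lemma epsmax (γ : ℝ) (hγ0 : 0 < γ) (hγ : γ ≤ S.gmax) {y : En n}
    (hy : y ∈ closedBall S.xb (S.r/2)) :
    ∃ ζ : En n, ζ ∈ closedBall S.xb S.r ∧ ζ ∈ edom S.f ∧ ‖ζ - y‖ ≤ (2*S.L+1)*γ ∧
      pmeH S.fb γ y ≤ ((-(S.F ζ y) + (-(‖ζ‖^2)/(2*γ) + ⟪ζ,y⟫/γ) + γ^2 : ℝ) : EReal) := by
  have hr := S.hr
  have hLpos := S.hL
  have hy4 : y ∈ closedBall S.xb (4*S.r) :=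
    closedBall_subset_closedBall (by linarith) hy
  have hy2 : y ∈ closedBall S.xb (2*S.r) :=
    closedBall_subset_closedBall (by linarith) hy
  obtain ⟨H, hHeq, hH1, hH2⟩ := S.HReal γ hγ0 hγ hy
  have hlt : ((H - γ^2 : ℝ) : EReal) < pmeH S.fb γ y := by
    rw [hHeq, EReal.coe_lt_coe_iff]
    nlinarith [hγ0]
  rw [pmeH] at hlt
  obtain ⟨ζ, hζ⟩ := lt_iSup_iff.mp hlt
  have hfbnetop : S.fb ζ y ≠ ⊤ := by
    intro h
    rw [h] at hζ
    simp only [EReal.neg_top, EReal.bot_add] at hζ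
    exact (not_lt_bot hζ)
  have hζdom : ζ ∈ edom S.f := by
    by_contra h
    exact hfbnetop (S.htop ζ y h)
  have hydom : y ∈ edom S.f := S.hdom hy4
  have hMle : ((S.M : ℝ) : EReal) ≤ S.fb ζ y := S.hMd ζ hζdom y hydom
  have hfbnebot : S.fb ζ y ≠ ⊥ := fun h => by simp [h] at hMle
  set β := (S.fb ζ y).toReal with hβdef
  have hβ : S.fb ζ y = ((β : ℝ) : EReal) := (EReal.coe_toReal hfbnetop hfbnebot).symm
  have hMβ : S.M ≤ β := by
    rw [hβ] at hMle
    exact EReal.coe_le_coe_iff.mp hMle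
  rw [hβ, ← EReal.coe_neg, ← EReal.coe_add, EReal.coe_lt_coe_iff] at hζ
  -- hζ : H - γ^2 < -β + (-(‖ζ‖^2)/(2*γ) + ⟪ζ,y⟫/γ)
  rw [inner_id ζ y hγ0] at hζ
  set s := ‖ζ - y‖ with hs
  have hs0 : 0 ≤ s := norm_nonneg _
  have hFyy : S.F y y ≤ S.c + 1 := S.hFub y hy4 y hy4
  have hγhalf : γ ≤ 1/2 := le_trans hγ S.gmax_le_half
  -- key : β + s^2/(2γ) < F y y + γ^2
  have hkey : β + s^2/(2*γ) < S.F y y + γ^2 := by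
    linarith [hζ, hH1]
  have hnear : s ≤ S.r := by
    by_contra hfar
    push_neg at hfar
    have h2γM : 2*γ*(S.c + 2 - S.M) ≤ S.r^2 := by
      have h1 := S.gmax_le_rM
      have h2 := S.hcM
      rw [le_div_iff₀ (by linarith)] at h1
      nlinarith [h1, mul_le_mul_of_nonneg_right hγ
        (show (0:ℝ) ≤ 2*(S.c+2-S.M) by linarith)]
    have hs2 : S.r^2 ≤ s^2 := by nlinarith
    have hd : S.c + 2 - S.M ≤ S.r^2/(2*γ) := by
      rw [le_div_iff₀ (by linarith)]
      nlinarith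
    have h5 : S.r^2/(2*γ) ≤ s^2/(2*γ) := by gcongr
    have hγsq : γ^2 ≤ 1 := by nlinarith
    linarith [hkey, hd, h5, hFyy, hMβ]
  have hζ2 : ζ ∈ closedBall S.xb (2*S.r) := by
    rw [mem_closedBall, dist_eq_norm]
    calc ‖ζ - S.xb‖ ≤ ‖ζ - y‖ + ‖y - S.xb‖ := norm_sub_le_norm_sub_add_norm_sub ζ y S.xb
      _ ≤ S.r + S.r/2 := by
          refine add_le_add hnear ?_
          rw [← dist_eq_norm]
          exact hy
      _ ≤ 2*S.r := by linarith
  have hlip := S.FLipz hy4 y hy2 ζ hζ2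
  have hβF : β = S.F ζ y := rfl
  have hnrev : ‖y - ζ‖ = s := by rw [hs, norm_sub_rev]
  rw [hnrev] at hlip
  -- s^2/(2γ) < L s + γ^2
  have hDs : s^2/(2*γ)*(2*γ) = s^2 := div_mul_cancel₀ _ (by linarith : (2*γ) ≠ 0)
  have hsmall : s ≤ (2*S.L+1)*γ := by
    by_contra hbig
    push_neg at hbig
    nlinarith [hkey, hlip, hγ0, hγhalf, hLpos, hDs]
  have hζ1 : ζ ∈ closedBall S.xb S.r := by
    rw [mem_closedBall, dist_eq_norm]
    have h2L : (2*S.L+1)*γ ≤ S.r/4 := by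
      have h1 := S.gmax_le_rL
      calc (2*S.L+1)*γ ≤ (2*S.L+1)*(S.r/(4*(2*S.L+1))) := by
            refine mul_le_mul_of_nonneg_left (le_trans hγ h1) (by linarith)
        _ = S.r/4 := by field_simp
    calc ‖ζ - S.xb‖ ≤ ‖ζ - y‖ + ‖y - S.xb‖ := norm_sub_le_norm_sub_add_norm_sub ζ y S.xb
      _ ≤ (2*S.L+1)*γ + S.r/2 := by
          refine add_le_add hsmall ?_
          rw [← dist_eq_norm]
          exact hy
      _ ≤ S.r := by linarith
  refine ⟨ζ, hζ1, hζdom, hsmall, ?_⟩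
  rw [hHeq, EReal.coe_le_coe_iff]
  have hβF : S.F ζ y = β := rfl
  rw [hβF, inner_id ζ y hγ0]
  linarith [hζ]

set_option maxHeartbeats 1000000 in
/-- The core estimate: for a subgradient `w` of `pmeH` at `x`, in direction `d`. -/
lemma core (γ : ℝ) (hγ0 : 0 < γ) (hγ : γ ≤ S.gmax) {x : En n}
    (hx : x ∈ ball S.xb (S.r/4)) {t : ℝ} (ht0 : 0 < t) (htγ : t ≤ γ)
    {d : En n} (hd : ‖d‖ ≤ 1) {w : En n}
    (hw : ∀ y', pmeH S.fb γ x + ((⟪w, y' - x⟫ : ℝ) : EReal) ≤ pmeH S.fb γ y') :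
    ∃ ζ s : En n, ζ ∈ closedBall S.xb S.r ∧ ‖ζ - (x - t • d)‖ ≤ (2*S.L+1)*γ ∧
      ‖s‖ ≤ S.L ∧
      (∀ q ∈ closedBall S.xb (2*S.r),
        -(S.F ζ (x - t • d)) + ⟪s, q - (x - t • d)⟫ ≤ -(S.F ζ q)) ∧
      (∀ z ∈ closedBall S.xb (2*S.r), ∀ τ : ℝ, 0 < τ → τ ≤ 1 →
        S.F ζ (x - t • d) + ⟪γ⁻¹ • ((x - t • d) - ζ), z - ζ⟫
          - τ*‖z - ζ‖^2/(2*γ) - γ^2/τ ≤ S.F z (x - t • d)) ∧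
      ⟪γ⁻¹ • x - w, d⟫ ≤ ⟪γ⁻¹ • ((x - t • d) - ζ) - s, d⟫ + t/γ + γ^2/t := by
  have hr := S.hr
  have hLpos := S.hL
  have hγr4 : γ ≤ S.r/4 := le_trans hγ S.gmax_le_r4
  set y : En n := x - t • d with hydef
  have hxr4 : ‖x - S.xb‖ < S.r/4 := by
    rw [← dist_eq_norm]; exact hx
  have hyr2 : y ∈ closedBall S.xb (S.r/2) := by
    rw [mem_closedBall, dist_eq_norm]
    calc ‖y - S.xb‖ = ‖(x - S.xb) - t • d‖ := by rw [hydef]; congr 1; abel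
      _ ≤ ‖x - S.xb‖ + ‖t • d‖ := norm_sub_le _ _
      _ ≤ S.r/4 + t*1 := by
          refine add_le_add hxr4.le ?_
          rw [norm_smul, Real.norm_eq_abs, abs_of_pos ht0]
          exact mul_le_mul_of_nonneg_left hd ht0.le
      _ ≤ S.r/2 := by linarith
  have hxr2 : x ∈ closedBall S.xb (S.r/2) := by
    rw [mem_closedBall, dist_eq_norm]
    linarith
  have hx4 : x ∈ closedBall S.xb (4*S.r) :=
    closedBall_subset_closedBall (by linarith) hxr2
  have hy4 : y ∈ closedBall S.xb (4*S.r) :=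
    closedBall_subset_closedBall (by linarith) hyr2
  -- near-maximizer at y
  obtain ⟨ζ, hζ1, hζdom, hζnear, hζmax⟩ := S.epsmax γ hγ0 hγ hyr2
  have hζ2 : ζ ∈ closedBall S.xb (2*S.r) := closedBall_subset_closedBall (by linarith) hζ1
  have hζ4 : ζ ∈ closedBall S.xb (4*S.r) := closedBall_subset_closedBall (by linarith) hζ1
  -- real values of pmeH at x, y
  obtain ⟨Hx, hHxeq, hHx1, hHx2⟩ := S.HReal γ hγ0 hγ hxr2
  obtain ⟨Hy, hHyeq, hHy1, hHy2⟩ := S.HReal γ hγ0 hγ hyr2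
  -- the subgradient of ψ = -F ζ ·
  have hψconv : ∀ p ∈ closedBall S.xb (2*S.r), ∀ q ∈ closedBall S.xb (2*S.r),
      ∀ a b : ℝ, 0 ≤ a → 0 ≤ b → a + b = 1 →
      -(S.F ζ (a • p + b • q)) ≤ a * (-(S.F ζ p)) + b * (-(S.F ζ q)) := by
    intro p hp q hq a b ha hb hab
    exact S.Fconcx hζ4 p (closedBall_subset_closedBall (by linarith) hp)
      q (closedBall_subset_closedBall (by linarith) hq) a b ha hb hab
  have hψlip : ∀ p ∈ closedBall S.xb (2*S.r), ∀ q ∈ closedBall S.xb (2*S.r),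
      -(S.F ζ p) - (-(S.F ζ q)) ≤ S.L * ‖p - q‖ := by
    intro p hp q hq
    have := S.FLipx hζ4 q hq p hp
    rw [norm_sub_rev] at this
    linarith
  have hymem : y ∈ ball S.xb ((2*S.r)/2) := by
    rw [mem_ball]
    calc dist y S.xb ≤ S.r/2 := hyr2
      _ < (2*S.r)/2 := by linarith
  obtain ⟨s, hsnorm, hssub⟩ := exists_subgrad (by linarith : (0:ℝ) < 2*S.r) hLpos.le
    hψconv hψlip hymem
  -- real inequalities from the subgradient hypothesis of w
  have hwxy : Hx + ⟪w, y - x⟫ ≤ Hy := by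
    have := hw y
    rw [hHxeq, hHyeq, ← EReal.coe_add, EReal.coe_le_coe_iff] at this
    exact this
  -- Hy ≤ -F ζ y + A + γ² (A = -(‖ζ‖²)/(2γ) + ⟪ζ,y⟫/γ)
  have hHyle : Hy ≤ -(S.F ζ y) + (-(‖ζ‖^2)/(2*γ) + ⟪ζ,y⟫/γ) + γ^2 := by
    have := hζmax
    rw [hHyeq, EReal.coe_le_coe_iff] at this
    exact this
  -- Hx ≥ -F ζ x + Ax
  have hHxge : -(S.F ζ x) + (-(‖ζ‖^2)/(2*γ) + ⟪ζ,x⟫/γ) ≤ Hx := by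
    have h := le_iSup (fun z => -(S.fb z x) +
      ((-(‖z‖^2)/(2*γ) + ⟪z,x⟫/γ : ℝ) : EReal)) ζ
    rw [← pmeH, hHxeq] at h
    have heq : -(S.fb ζ x) + ((-(‖ζ‖^2)/(2*γ) + ⟪ζ,x⟫/γ : ℝ) : EReal)
        = ((-(S.F ζ x) + (-(‖ζ‖^2)/(2*γ) + ⟪ζ,x⟫/γ) : ℝ) : EReal) := by
      rw [S.hfb_eq ζ hζ4 x hx4, ← EReal.coe_neg, ← EReal.coe_add]
      rfl
    rw [heq, EReal.coe_le_coe_iff] at h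
    exact h
  -- the subgradient inequality of s at q = x
  have hsx : -(S.F ζ y) + ⟪s, x - y⟫ ≤ -(S.F ζ x) :=
    hssub x (closedBall_subset_closedBall (by linarith) hxr2)
  -- inner products
  have hxy : x - y = t • d := by rw [hydef]; abel
  have hyx : y - x = -(t • d) := by rw [hydef]; abel
  have hwinner : ⟪w, y - x⟫ = -(t * ⟪w, d⟫) := by
    rw [hyx, inner_neg_right, real_inner_smul_right]
  have hsinner : ⟪s, x - y⟫ = t * ⟪s, d⟫ := by
    rw [hxy, real_inner_smul_right]
  have hζinner : ⟪ζ, y⟫/γ - ⟪ζ, x⟫/γ = -(t * ⟪ζ, d⟫)/γ := by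
    rw [div_sub_div_same]
    congr 1
    rw [← inner_sub_right, hyx, inner_neg_right, real_inner_smul_right]
  -- main chain: -(t ⟪w,d⟫) ≤ -(t ⟪s,d⟫) - t⟪ζ,d⟫/γ + γ²
  have hchain1 : -(t * ⟪w, d⟫) ≤ -(t * ⟪s, d⟫) - t * ⟪ζ, d⟫/γ + γ^2 := by
    have h1 : Hx - t * ⟪w, d⟫ ≤ Hy := by
      rw [hwinner] at hwxy
      linarith
    have h2 : Hy ≤ -(S.F ζ y) + (-(‖ζ‖^2)/(2*γ) + ⟪ζ,y⟫/γ) + γ^2 := hHyle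
    have h3 : -(S.F ζ y) ≤ -(S.F ζ x) - t * ⟪s, d⟫ := by
      rw [hsinner] at hsx
      linarith
    have h4 : -(S.F ζ x) + (-(‖ζ‖^2)/(2*γ) + ⟪ζ,x⟫/γ) ≤ Hx := hHxge
    have h5 : ⟪ζ,y⟫/γ = ⟪ζ,x⟫/γ - t * ⟪ζ, d⟫/γ := by
      have := hζinner
      field_simp at this ⊢
      linarith
    linarith [h1, h2, h3, h4]
  -- base proximal inequality at near-maximizer
  have hbase : ∀ z' ∈ closedBall S.xb (4*S.r),
      S.F ζ y + ‖ζ - y‖^2/(2*γ) - γ^2 ≤ S.F z' y + ‖z' - y‖^2/(2*γ) := by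
    intro z' hz'
    have hterm : -(S.fb z' y) + ((-(‖z'‖^2)/(2*γ) + ⟪z',y⟫/γ : ℝ) : EReal) ≤ pmeH S.fb γ y :=
      le_iSup (fun z => -(S.fb z y) + ((-(‖z‖^2)/(2*γ) + ⟪z,y⟫/γ : ℝ) : EReal)) z'
    have hterm2 : ((-(S.F z' y) + (-(‖z'‖^2)/(2*γ) + ⟪z',y⟫/γ) : ℝ) : EReal) ≤
        ((-(S.F ζ y) + (-(‖ζ‖^2)/(2*γ) + ⟪ζ,y⟫/γ) + γ^2 : ℝ) : EReal) := by
      refine le_trans ?_ hζmax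
      refine le_trans (le_of_eq ?_) hterm
      rw [S.hfb_eq z' hz' y hy4, ← EReal.coe_neg, ← EReal.coe_add]
      rfl
    rw [EReal.coe_le_coe_iff, inner_id z' y hγ0, inner_id ζ y hγ0] at hterm2
    linarith [hterm2]
  have hprox : ∀ z ∈ closedBall S.xb (2*S.r), ∀ τ : ℝ, 0 < τ → τ ≤ 1 →
      S.F ζ y + ⟪γ⁻¹ • (y - ζ), z - ζ⟫ - τ*‖z - ζ‖^2/(2*γ) - γ^2/τ ≤ S.F z y := by
    intro z hz τ hτ0 hτ1
    set zτ : En n := ζ + τ • (z - ζ) with hzτdef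
    have hcomb : zτ = (1-τ) • ζ + τ • z := by rw [hzτdef]; module
    have hzτ2 : zτ ∈ closedBall S.xb (2*S.r) := by
      rw [hcomb]
      exact (convex_closedBall S.xb (2*S.r)) hζ2 hz (by linarith) hτ0.le (by ring)
    have hzτ4 : zτ ∈ closedBall S.xb (4*S.r) :=
      closedBall_subset_closedBall (by linarith) hzτ2
    have hz4 : z ∈ closedBall S.xb (4*S.r) :=
      closedBall_subset_closedBall (by linarith) hz
    have hb := hbase zτ hzτ4
    have hcv := S.Fconvz hy4 ζ hζ4 z hz4 (1-τ) τ (by linarith) hτ0.le (by ring)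
    rw [← hcomb] at hcv
    -- expand ‖zτ - y‖²
    have hexp : ‖zτ - y‖^2 = ‖ζ - y‖^2 + 2*τ*⟪ζ - y, z - ζ⟫ + τ^2*‖z - ζ‖^2 := by
      have h1 : zτ - y = (ζ - y) + τ • (z - ζ) := by rw [hzτdef]; abel
      rw [h1, norm_add_sq_real, real_inner_smul_right, norm_smul, Real.norm_eq_abs,
        abs_of_pos hτ0, mul_pow]
      ring
    have hinner : ⟪γ⁻¹ • (y - ζ), z - ζ⟫ = -(⟪ζ - y, z - ζ⟫/γ) := by
      rw [real_inner_smul_left]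
      rw [show y - ζ = -(ζ - y) by abel, inner_neg_left]
      field_simp
    rw [hinner]
    -- from hb and hcv : τ * F z y ≥ τ * F ζ y - τ*⟪ζ-y,z-ζ⟫/γ - τ²‖z-ζ‖²/(2γ) - γ²
    have hstep : τ * S.F ζ y - τ*⟪ζ - y, z - ζ⟫/γ - τ^2*‖z - ζ‖^2/(2*γ) - γ^2
        ≤ τ * S.F z y := by
      have e1 : ‖zτ - y‖^2/(2*γ) = ‖ζ - y‖^2/(2*γ) + τ*⟪ζ - y, z - ζ⟫/γ
          + τ^2*‖z - ζ‖^2/(2*γ) := by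
        rw [hexp]
        field_simp
      have hb2 : S.F ζ y - τ*⟪ζ - y, z - ζ⟫/γ - τ^2*‖z - ζ‖^2/(2*γ) - γ^2 ≤ S.F zτ y := by
        have := hb
        rw [e1] at this
        linarith
      linarith [hb2, hcv]
    have hγτ : τ * (γ^2/τ) = γ^2 := by
      rw [mul_comm]; exact div_mul_cancel₀ _ hτ0.ne'
    rw [← mul_le_mul_iff_right₀ hτ0]
    have e2 : τ * (S.F ζ y + -(⟪ζ - y, z - ζ⟫/γ) - τ*‖z - ζ‖^2/(2*γ) - γ^2/τ)
        = τ*S.F ζ y + τ*(-(⟪ζ - y, z - ζ⟫/γ)) - τ*(τ*‖z - ζ‖^2/(2*γ)) - τ*(γ^2/τ) := by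
      ring
    rw [e2, hγτ]
    have e3 : τ*(-(⟪ζ - y, z - ζ⟫/γ)) = -(τ*⟪ζ - y, z - ζ⟫/γ) := by ring
    have e4 : τ*(τ*‖z - ζ‖^2/(2*γ)) = τ^2*‖z - ζ‖^2/(2*γ) := by ring
    rw [e3, e4]
    linarith [hstep]
  -- final inequality
  have hfinal : ⟪γ⁻¹ • x - w, d⟫ ≤ ⟪γ⁻¹ • (y - ζ) - s, d⟫ + t/γ + γ^2/t := by
    have hwd : ⟪s, d⟫ + ⟪ζ, d⟫/γ - γ^2/t ≤ ⟪w, d⟫ := by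
      rw [← mul_le_mul_iff_right₀ ht0]
      have hQ : t * (γ^2/t) = γ^2 := by
        rw [mul_comm]; exact div_mul_cancel₀ _ ht0.ne'
      have hexp : t * (⟪s, d⟫ + ⟪ζ, d⟫/γ - γ^2/t)
          = t * ⟪s, d⟫ + t * ⟪ζ, d⟫/γ - t*(γ^2/t) := by ring
      rw [hexp, hQ]
      linarith [hchain1]
    have hxd : ⟪γ⁻¹ • x - w, d⟫ = ⟪x, d⟫/γ - ⟪w, d⟫ := by
      rw [inner_sub_left, real_inner_smul_left, div_eq_inv_mul]
    have hyζd : ⟪γ⁻¹ • (y - ζ) - s, d⟫ = ⟪y - ζ, d⟫/γ - ⟪s, d⟫ := by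
      rw [inner_sub_left, real_inner_smul_left, div_eq_inv_mul]
    rw [hxd, hyζd]
    have hxζ : ⟪x, d⟫/γ = ⟪y - ζ, d⟫/γ + ⟪ζ, d⟫/γ + t*⟪d, d⟫/γ := by
      rw [← add_div, ← add_div]
      congr 1
      rw [← inner_add_left, ← real_inner_smul_left, ← inner_add_left]
      congr 1
      rw [hydef]
      module
    have hdd : t*⟪d, d⟫/γ ≤ t/γ := by
      have h1 : ‖d‖^2 ≤ 1 := by nlinarith [norm_nonneg d, hd]
      have h2 : t*⟪d, d⟫ ≤ t := by
        rw [real_inner_self_eq_norm_sq]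
        nlinarith
      have h3 := mul_le_mul_of_nonneg_right h2 (inv_nonneg.mpr hγ0.le)
      simpa [div_eq_mul_inv] using h3
    linarith [hwd, hxζ, hdd]
  exact ⟨ζ, s, hζ1, hζnear, hsnorm, hssub, hprox, hfinal⟩

lemma uniqG {γ : ℝ} (hγ0 : 0 < γ) {x v : En n} (hv : v ∈ eSubdiff (pmeG γ) x) :
    v = γ⁻¹ • x := by
  obtain ⟨-, hineq⟩ := hv
  have hreal : ∀ y : En n, ‖x‖^2/(2*γ) + ⟪v, y - x⟫ ≤ ‖y‖^2/(2*γ) := by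
    intro y
    have h := hineq y
    rw [pmeG, pmeG, ← EReal.coe_add, EReal.coe_le_coe_iff] at h
    exact h
  set δ : En n := v - γ⁻¹ • x with hδ
  suffices hδ0 : δ = 0 by
    rw [hδ, sub_eq_zero] at hδ0
    exact hδ0
  have h := hreal (x + γ • δ)
  have hy : ‖x + γ•δ‖^2 = ‖x‖^2 + 2*(γ*⟪x,δ⟫) + γ^2*‖δ‖^2 := by
    rw [norm_add_sq_real, real_inner_smul_right, norm_smul, Real.norm_eq_abs,
      abs_of_pos hγ0, mul_pow]
  have hinner : ⟪v, (x + γ•δ) - x⟫ = γ*⟪v,δ⟫ := by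
    rw [add_sub_cancel_left, real_inner_smul_right]
  rw [hinner, hy] at h
  have e : (‖x‖^2 + 2*(γ*⟪x,δ⟫) + γ^2*‖δ‖^2)/(2*γ)
      = ‖x‖^2/(2*γ) + ⟪x,δ⟫ + γ*‖δ‖^2/2 := by
    field_simp
  rw [e] at h
  have hvδ : ⟪v,δ⟫ = ‖δ‖^2 + ⟪γ⁻¹ • x, δ⟫ := by
    have h1 : ⟪v,δ⟫ - ⟪γ⁻¹ • x, δ⟫ = ‖δ‖^2 := by
      rw [← inner_sub_left, ← hδ, real_inner_self_eq_norm_sq]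
    linarith
  have hsc : γ * ⟪γ⁻¹ • x, δ⟫ = ⟪x, δ⟫ := by
    rw [real_inner_smul_left]
    field_simp
  have hnormsq : ‖δ‖^2 ≤ 0 := by nlinarith [h, hvδ, hsc, hγ0]
  have : ‖δ‖ = 0 := by nlinarith [norm_nonneg δ, sq_nonneg ‖δ‖]
  exact norm_eq_zero.mp this

set_option maxHeartbeats 1000000 in
lemma bound (γ : ℝ) (hγ0 : 0 < γ) (hγ : γ ≤ S.gmax) {x : En n}
    (hx : x ∈ ball S.xb (S.r/4)) {w : En n} (hw : w ∈ eSubdiff (pmeH S.fb γ) x) :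
    ‖γ⁻¹ • x - w‖ ≤ 3*S.L + 3 := by
  have hLpos := S.hL
  set u : En n := γ⁻¹ • x - w with hu
  rcases eq_or_ne u 0 with h0 | h0
  · rw [h0, norm_zero]
    linarith
  · have hun : 0 < ‖u‖ := norm_pos_iff.mpr h0
    set d : En n := ‖u‖⁻¹ • u with hd
    have hdn : ‖d‖ = 1 := by
      rw [hd, norm_smul, norm_inv, norm_norm]
      field_simp
    obtain ⟨ζ, s, hζ1, hζnear, hsnorm, -, -, hchain⟩ :=
      S.core γ hγ0 hγ hx hγ0 (le_refl γ) (le_of_eq hdn) hw.2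
    have hud : ⟪u, d⟫ = ‖u‖ := by
      rw [hd, real_inner_smul_right, real_inner_self_eq_norm_sq]
      field_simp
    have hγγ : γ/γ = 1 := div_self hγ0.ne'
    have hγ2 : γ^2/γ = γ := by
      rw [sq, mul_div_assoc, hγγ, mul_one]
    rw [← hu, hud, hγγ, hγ2] at hchain
    have hCS : ⟪γ⁻¹ • ((x - γ • d) - ζ) - s, d⟫ ≤ ‖γ⁻¹ • ((x - γ • d) - ζ) - s‖ := by
      calc ⟪γ⁻¹ • ((x - γ • d) - ζ) - s, d⟫ ≤ ‖γ⁻¹ • ((x - γ • d) - ζ) - s‖ * ‖d‖ :=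
            real_inner_le_norm _ _
        _ = ‖γ⁻¹ • ((x - γ • d) - ζ) - s‖ := by rw [hdn, mul_one]
    have hnζ : ‖γ⁻¹ • ((x - γ • d) - ζ)‖ ≤ 2*S.L + 1 := by
      rw [norm_smul, norm_inv, Real.norm_eq_abs, abs_of_pos hγ0]
      rw [show (x - γ • d) - ζ = -(ζ - (x - γ • d)) by abel, norm_neg]
      rw [inv_mul_le_iff₀ hγ0]
      calc ‖ζ - (x - γ • d)‖ ≤ (2*S.L+1)*γ := hζnear
        _ = γ * (2*S.L+1) := by ring
    have htri : ‖γ⁻¹ • ((x - γ • d) - ζ) - s‖ ≤ (2*S.L+1) + S.L := by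
      calc ‖γ⁻¹ • ((x - γ • d) - ζ) - s‖ ≤ ‖γ⁻¹ • ((x - γ • d) - ζ)‖ + ‖s‖ := norm_sub_le _ _
        _ ≤ (2*S.L+1) + S.L := add_le_add hnζ hsnorm
    have hγhalf : γ ≤ 1/2 := le_trans hγ S.gmax_le_half
    linarith [hchain, hCS, htri]

lemma fb_ne_bot {z x : En n} (hx : x ∈ edom S.f) : S.fb z x ≠ ⊥ := by
  by_cases hz : z ∈ edom S.f
  · intro h
    have := S.hMd z hz x hx
    rw [h] at this
    exact (EReal.coe_ne_bot S.M) (le_bot_iff.mp this)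
  · rw [S.htop z x hz]
    simp

lemma xb_mem4 : S.xb ∈ closedBall S.xb (4*S.r) := mem_closedBall_self (by linarith [S.hr])
lemma xb_dom : S.xb ∈ edom S.f := S.hdom S.xb_mem4

set_option maxHeartbeats 1000000 in
lemma globA {a : En n} (hloc : ∀ z ∈ ball S.xb S.r, S.c + ⟪a, z - S.xb⟫ ≤ S.F z S.xb) :
    a ∈ eSubdiff (fun z => S.fb z S.xb) S.xb := by
  have hr := S.hr
  constructor
  · show S.fb S.xb S.xb ≠ ⊤
    rw [S.hcc]
    exact EReal.coe_ne_top _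
  · intro z
    show S.fb S.xb S.xb + _ ≤ S.fb z S.xb
    by_cases htopz : S.fb z S.xb = ⊤
    · rw [htopz]; exact le_top
    · have hnb : S.fb z S.xb ≠ ⊥ := S.fb_ne_bot S.xb_dom
      set β := (S.fb z S.xb).toReal with hβdef
      have hβ : S.fb z S.xb = ((β : ℝ) : EReal) := (EReal.coe_toReal htopz hnb).symm
      rw [S.hcc, hβ, ← EReal.coe_add, EReal.coe_le_coe_iff]
      rcases eq_or_ne z S.xb with rfl | hzne
      · have hβc : β = S.c := by
          have := hβ ▸ S.hcc
          exact (EReal.coe_eq_coe_iff.mp this)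
        rw [hβc]
        simp
      · have hzn : 0 < ‖z - S.xb‖ := norm_pos_iff.mpr (sub_ne_zero_of_ne hzne)
        set t := min (S.r/(2*‖z - S.xb‖)) 1 with htdef
        have ht0 : 0 < t := lt_min (by positivity) one_pos
        have ht1 : t ≤ 1 := min_le_right _ _
        set zt : En n := S.xb + t • (z - S.xb) with hztdef
        have hztb : zt ∈ ball S.xb S.r := by
          rw [mem_ball, dist_eq_norm, hztdef, add_sub_cancel_left, norm_smul,
            Real.norm_eq_abs, abs_of_pos ht0]
          calc t * ‖z - S.xb‖ ≤ (S.r/(2*‖z - S.xb‖)) * ‖z - S.xb‖ :=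
                mul_le_mul_of_nonneg_right (min_le_left _ _) hzn.le
            _ = S.r/2 := by field_simp
            _ < S.r := by linarith
        have hzt4 : zt ∈ closedBall S.xb (4*S.r) :=
          closedBall_subset_closedBall (by linarith) (ball_subset_closedBall hztb)
        have hloc' := hloc zt hztb
        have hcomb : t • z + (1-t) • S.xb = zt := by rw [hztdef]; module
        have hcv := S.hcvz S.xb S.xb_dom z S.xb t (1-t) ht0.le (by linarith) (by ring)
        simp only at hcv
        rw [hcomb, hβ, S.hcc] at hcv
        rw [S.hfb_eq zt hzt4 S.xb S.xb_mem4] at hcv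
        rw [show ((t:ℝ):EReal) * ((β:ℝ):EReal) = (((t*β : ℝ)):EReal) from
          (EReal.coe_mul _ _).symm] at hcv
        rw [show (((1-t:ℝ)):EReal) * ((S.c:ℝ):EReal) = ((((1-t)*S.c : ℝ)):EReal) from
          (EReal.coe_mul _ _).symm] at hcv
        rw [← EReal.coe_add, EReal.coe_le_coe_iff] at hcv
        have hFe : (S.fb zt S.xb).toReal = S.F zt S.xb := rfl
        rw [hFe] at hcv
        have hinner : ⟪a, zt - S.xb⟫ = t * ⟪a, z - S.xb⟫ := by
          rw [hztdef, add_sub_cancel_left, real_inner_smul_right]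
        rw [hinner] at hloc'
        have h3 : t*(S.c + ⟪a, z - S.xb⟫ - β) ≤ t*0 := by
          rw [mul_zero]
          linarith [hloc', hcv]
        have h4 := (mul_le_mul_iff_right₀ ht0).mp h3
        linarith

set_option maxHeartbeats 1000000 in
lemma globB {s : En n} (hloc : ∀ x' ∈ ball S.xb S.r, -S.c + ⟪s, x' - S.xb⟫ ≤ -(S.F S.xb x')) :
    s ∈ eSubdiff (fun x => -(S.fb S.xb x)) S.xb := by
  have hr := S.hr
  constructor
  · show -(S.fb S.xb S.xb) ≠ ⊤
    rw [S.hcc, ← EReal.coe_neg]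
    exact EReal.coe_ne_top _
  · intro x'
    show -(S.fb S.xb S.xb) + _ ≤ -(S.fb S.xb x')
    by_cases hx'dom : x' ∈ edom S.f
    · rcases eq_or_ne x' S.xb with rfl | hne
      · rw [S.hcc]
        simp
      · have hx'n : 0 < ‖x' - S.xb‖ := norm_pos_iff.mpr (sub_ne_zero_of_ne hne)
        -- first, fb xb x' ≠ ⊤
        have hnetop : S.fb S.xb x' ≠ ⊤ := by
          intro htp
          set t' := min (S.r/(2*‖S.xb - x'‖)) 1 with ht'def
          have hxx'n : 0 < ‖S.xb - x'‖ := by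
            rw [norm_sub_rev]; exact hx'n
          have ht'0 : 0 < t' := lt_min (by positivity) one_pos
          set x'' : En n := S.xb + t' • (S.xb - x') with hx''def
          have hx''b : x'' ∈ ball S.xb S.r := by
            rw [mem_ball, dist_eq_norm, hx''def, add_sub_cancel_left, norm_smul,
              Real.norm_eq_abs, abs_of_pos ht'0]
            calc t' * ‖S.xb - x'‖ ≤ (S.r/(2*‖S.xb - x'‖)) * ‖S.xb - x'‖ :=
                  mul_le_mul_of_nonneg_right (min_le_left _ _) hxx'n.le
              _ = S.r/2 := by field_simp
              _ < S.r := by linarith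
          have hx''4 : x'' ∈ closedBall S.xb (4*S.r) :=
            closedBall_subset_closedBall (by linarith) (ball_subset_closedBall hx''b)
          have h1t : (0:ℝ) < 1 + t' := by linarith
          have hcomb : (1/(1+t')) • x'' + (t'/(1+t')) • x' = S.xb := by
            rw [hx''def]
            match_scalars <;> field_simp <;> ring
          have hcv := S.hccx S.xb S.xb_dom x'' x' (1/(1+t')) (t'/(1+t'))
            (by positivity) (by positivity) (by field_simp)
          simp only at hcv
          rw [hcomb, htp] at hcv
          rw [show -(⊤:EReal) = ⊥ from EReal.neg_top] at hcv
          rw [EReal.mul_bot_of_pos (by exact_mod_cast div_pos ht'0 h1t), EReal.add_bot] at hcv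
          rw [S.hcc, ← EReal.coe_neg] at hcv
          exact (EReal.coe_ne_bot _) (le_bot_iff.mp hcv)
        have hnb : S.fb S.xb x' ≠ ⊥ := S.fb_ne_bot hx'dom
        set β := (S.fb S.xb x').toReal with hβdef
        have hβ : S.fb S.xb x' = ((β : ℝ) : EReal) := (EReal.coe_toReal hnetop hnb).symm
        rw [S.hcc, hβ, ← EReal.coe_neg, ← EReal.coe_neg, ← EReal.coe_add,
          EReal.coe_le_coe_iff]
        -- goal : -c + ⟪s, x' - xb⟫ ≤ -β
        set t := min (S.r/(2*‖x' - S.xb‖)) 1 with htdef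
        have ht0 : 0 < t := lt_min (by positivity) one_pos
        have ht1 : t ≤ 1 := min_le_right _ _
        set xt : En n := S.xb + t • (x' - S.xb) with hxtdef
        have hxtb : xt ∈ ball S.xb S.r := by
          rw [mem_ball, dist_eq_norm, hxtdef, add_sub_cancel_left, norm_smul,
            Real.norm_eq_abs, abs_of_pos ht0]
          calc t * ‖x' - S.xb‖ ≤ (S.r/(2*‖x' - S.xb‖)) * ‖x' - S.xb‖ :=
                mul_le_mul_of_nonneg_right (min_le_left _ _) hx'n.le
            _ = S.r/2 := by field_simp
            _ < S.r := by linarith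
        have hxt4 : xt ∈ closedBall S.xb (4*S.r) :=
          closedBall_subset_closedBall (by linarith) (ball_subset_closedBall hxtb)
        have hx'4? : True := trivial
        have hloc' := hloc xt hxtb
        have hcomb : t • x' + (1-t) • S.xb = xt := by rw [hxtdef]; module
        have hcv := S.hccx S.xb S.xb_dom x' S.xb t (1-t) ht0.le (by linarith) (by ring)
        simp only at hcv
        rw [hcomb, hβ, S.hcc] at hcv
        rw [S.hfb_eq S.xb S.xb_mem4 xt hxt4] at hcv
        rw [← EReal.coe_neg, ← EReal.coe_neg, ← EReal.coe_neg] at hcv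
        rw [show ((t:ℝ):EReal) * (((-β:ℝ)):EReal) = (((t*(-β) : ℝ)):EReal) from
          (EReal.coe_mul _ _).symm] at hcv
        rw [show (((1-t:ℝ)):EReal) * (((-S.c:ℝ)):EReal) = ((((1-t)*(-S.c) : ℝ)):EReal) from
          (EReal.coe_mul _ _).symm] at hcv
        rw [← EReal.coe_add, EReal.coe_le_coe_iff] at hcv
        have hFe : (S.fb S.xb xt).toReal = S.F S.xb xt := rfl
        rw [hFe] at hcv
        have hinner : ⟪s, xt - S.xb⟫ = t * ⟪s, x' - S.xb⟫ := by
          rw [hxtdef, add_sub_cancel_left, real_inner_smul_right]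
        rw [hinner] at hloc'
        have h3 : t*(⟪s, x' - S.xb⟫ + β - S.c) ≤ t*0 := by
          rw [mul_zero]
          linarith [hloc', hcv]
        have h4 := (mul_le_mul_iff_right₀ ht0).mp h3
        linarith
    · rw [S.hbot S.xb x' S.xb_dom hx'dom]
      simp

lemma eSubdiff_closed (g : En n → EReal) (x0 : En n) (β : ℝ) (hgx : g x0 = ((β:ℝ):EReal)) :
    IsClosed (eSubdiff g x0) := by
  have hrw : eSubdiff g x0 = ⋂ y, {v : En n | g x0 + ((⟪v, y - x0⟫ : ℝ) : EReal) ≤ g y} := by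
    ext v
    simp only [eSubdiff, mem_setOf_eq, mem_iInter]
    constructor
    · rintro ⟨-, h⟩ y; exact h y
    · intro h
      refine ⟨?_, h⟩
      rw [hgx]
      exact EReal.coe_ne_top β
  rw [hrw]
  refine isClosed_iInter (fun y => ?_)
  by_cases hgyt : g y = ⊤
  · have : {v : En n | g x0 + ((⟪v, y - x0⟫ : ℝ) : EReal) ≤ g y} = univ := by
      ext v; simp [hgyt]
    rw [this]; exact isClosed_univ
  · by_cases hgyb : g y = ⊥
    · have : {v : En n | g x0 + ((⟪v, y - x0⟫ : ℝ) : EReal) ≤ g y} = ∅ := by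
        ext v
        simp only [hgyb, hgx, mem_empty_iff_false, iff_false, mem_setOf_eq, le_bot_iff]
        rw [← EReal.coe_add]
        exact EReal.coe_ne_bot _
      rw [this]; exact isClosed_empty
    · set β' := (g y).toReal with hβ'def
      have hβ' : g y = ((β':ℝ):EReal) := (EReal.coe_toReal hgyt hgyb).symm
      have : {v : En n | g x0 + ((⟪v, y - x0⟫ : ℝ) : EReal) ≤ g y}
          = {v : En n | β + ⟪v, y - x0⟫ ≤ β'} := by
        ext v
        rw [mem_setOf_eq, mem_setOf_eq, hgx, hβ', ← EReal.coe_add, EReal.coe_le_coe_iff]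
      rw [this]
      exact isClosed_le (continuous_const.add (Continuous.inner continuous_id continuous_const)) continuous_const

lemma eSubdiff_convex (g : En n → EReal) (x0 : En n) : Convex ℝ (eSubdiff g x0) := by
  intro v₁ hv₁ v₂ hv₂ a b ha hb hab
  refine ⟨hv₁.1, fun y => ?_⟩
  have hinner : (⟪a • v₁ + b • v₂, y - x0⟫ : ℝ) = a * ⟪v₁, y - x0⟫ + b * ⟪v₂, y - x0⟫ := by
    rw [inner_add_left, real_inner_smul_left, real_inner_smul_left]
  by_cases hgxb : g x0 = ⊥
  · rw [hgxb, EReal.bot_add]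
    exact bot_le
  · have hβ : g x0 = (((g x0).toReal : ℝ) : EReal) := (EReal.coe_toReal hv₁.1 hgxb).symm
    set β := (g x0).toReal
    by_cases hgyt : g y = ⊤
    · rw [hgyt]; exact le_top
    · by_cases hgyb : g y = ⊥
      · exfalso
        have h1 := hv₁.2 y
        rw [hgyb, hβ, ← EReal.coe_add, le_bot_iff] at h1
        exact (EReal.coe_ne_bot _) h1
      · set β' := (g y).toReal with hβ'def
        have hβ' : g y = ((β':ℝ):EReal) := (EReal.coe_toReal hgyt hgyb).symm
        have h1 := hv₁.2 y
        have h2 := hv₂.2 y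
        rw [hβ, hβ', ← EReal.coe_add, EReal.coe_le_coe_iff] at h1 h2
        rw [hβ, hβ', hinner, ← EReal.coe_add, EReal.coe_le_coe_iff]
        have e1 : a*β + b*β = β := by rw [← add_mul, hab, one_mul]
        have e2 : a*β' + b*β' = β' := by rw [← add_mul, hab, one_mul]
        nlinarith [mul_le_mul_of_nonneg_left h1 ha, mul_le_mul_of_nonneg_left h2 hb, e1, e2]

lemma boundedA : ∀ a ∈ eSubdiff (fun z => S.fb z S.xb) S.xb, ‖a‖ ≤ S.L := by
  have hr := S.hr
  rintro a ⟨-, h⟩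
  rcases eq_or_ne a 0 with rfl | ha0
  · rw [norm_zero]; exact S.hL.le
  · have han : 0 < ‖a‖ := norm_pos_iff.mpr ha0
    set y : En n := S.xb + S.r • (‖a‖⁻¹ • a) with hydef
    have hy4 : y ∈ closedBall S.xb (4*S.r) := by
      rw [mem_closedBall, dist_eq_norm, hydef, add_sub_cancel_left, norm_smul, norm_smul,
        norm_inv, norm_norm, Real.norm_eq_abs, abs_of_pos hr]
      rw [inv_mul_cancel₀ han.ne', mul_one]
      linarith
    have h1 : S.fb S.xb S.xb + ((⟪a, y - S.xb⟫ : ℝ) : EReal) ≤ S.fb y S.xb := h y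
    rw [S.hcc, S.hfb_eq y hy4 S.xb S.xb_mem4, ← EReal.coe_add, EReal.coe_le_coe_iff] at h1
    have hinner : (⟪a, y - S.xb⟫ : ℝ) = S.r * ‖a‖ := by
      rw [hydef, add_sub_cancel_left, real_inner_smul_right, real_inner_smul_right,
        real_inner_self_eq_norm_sq]
      field_simp
    rw [hinner] at h1
    have hFe : (S.fb y S.xb).toReal = S.F y S.xb := rfl
    rw [hFe] at h1
    have h2 : S.F y S.xb ≤ S.c + 1 := S.hFub y hy4 S.xb S.xb_mem4
    rw [L, le_div_iff₀ hr]
    nlinarith [h1, h2]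

lemma Fcont {p q : ℕ → En n} {p0 q0 : En n}
    (hp4 : ∀ j, p j ∈ closedBall S.xb (4*S.r)) (hq4 : ∀ j, q j ∈ closedBall S.xb (4*S.r))
    (hp04 : p0 ∈ closedBall S.xb (4*S.r)) (hq04 : q0 ∈ closedBall S.xb (4*S.r))
    (hp : Tendsto p atTop (nhds p0)) (hq : Tendsto q atTop (nhds q0)) :
    Tendsto (fun j => S.F (p j) (q j)) atTop (nhds (S.F p0 q0)) := by
  have hU : IsOpen ((interior (edom S.f)) ×ˢ (interior (edom S.f))) :=
    isOpen_interior.prod isOpen_interior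
  have hmem : (p0, q0) ∈ (interior (edom S.f)) ×ˢ (interior (edom S.f)) :=
    ⟨S.hint hp04, S.hint hq04⟩
  have hCA : ContinuousAt (fun pr : En n × En n => S.fb pr.1 pr.2) (p0, q0) :=
    S.hcont.continuousAt (hU.mem_nhds hmem)
  have h1 : Tendsto (fun j => (p j, q j)) atTop (nhds (p0, q0)) := hp.prodMk_nhds hq
  have h2 : Tendsto (fun j => S.fb (p j) (q j)) atTop (nhds (S.fb p0 q0)) :=
    (hCA.tendsto).comp h1
  have h3 : Tendsto (fun j => ((S.F (p j) (q j) : ℝ) : EReal)) atTop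
      (nhds ((S.F p0 q0 : ℝ) : EReal)) := by
    rw [show ((S.F p0 q0 : ℝ) : EReal) = S.fb p0 q0 from (S.hfb_eq _ hp04 _ hq04).symm]
    exact h2.congr (fun j => (S.hfb_eq _ (hp4 j) _ (hq4 j)))
  exact EReal.tendsto_coe.mp h3

end Setup

end Aux

/-- In the setting of Statement 3 (icc `f` with lifted function `f̄` and the
partial-Moreau-envelope approximating sequence with parameters `γ_k ↓ 0`), for every
`x̄ ∈ int (dom f)` the approximate subdifferential associated with `{g_{γ_k}, h_{γ_k}}`
satisfies `∂_A f(x̄) ⊆ ∂₁f̄(x̄,x̄) - ∂₂(-f̄)(x̄,x̄)` and `∂_A^∞ f(x̄) = {0}`. -/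
theorem stmt4 {n : ℕ} (f : En n → EReal) (hproper : ProperE f)
    (hlsc : LowerSemicontinuous f)
    (fb : En n → En n → EReal) (hicc : IsICC f fb)
    (hdomclosed : IsClosed (edom f))
    (hfb_lsc : LowerSemicontinuousOn (fun p : En n × En n => fb p.1 p.2)
      (Set.univ ×ˢ edom f))
    (hfb_bdd : ∃ M : ℝ, ∀ z ∈ edom f, ∀ x ∈ edom f, (M : EReal) ≤ fb z x)
    (hfb_cont : ContinuousOn (fun p : En n × En n => fb p.1 p.2)
      (interior (edom f) ×ˢ interior (edom f)))
    (γ : ℕ → ℝ) (hγpos : ∀ k, 0 < γ k) (hγanti : Antitone γ)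
    (hγ0 : Tendsto γ atTop (nhds 0))
    (xb : En n) (hxb : xb ∈ interior (edom f)) :
    eApproxSubdiff (fun k => pmeG (γ k)) (fun k => pmeH fb (γ k)) xb ⊆
      eSubdiff (fun z => fb z xb) xb - eSubdiff (fun x => -(fb xb x)) xb ∧
    eApproxHorSubdiff (fun k => pmeG (γ k)) (fun k => pmeH fb (γ k)) xb = {0} := by
  classical
  -- Step 0: basic facts about xb
  have hxbdom : xb ∈ edom f := interior_subset hxb
  have hfxb_ne_top : f xb ≠ ⊤ := ne_of_lt hxbdom
  have hfxb_ne_bot : f xb ≠ ⊥ := hproper.2 xb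
  set c : ℝ := (f xb).toReal with hcdef
  have hfc : f xb = ((c : ℝ) : EReal) := (EReal.coe_toReal hfxb_ne_top hfxb_ne_bot).symm
  have hfbcc : fb xb xb = ((c : ℝ) : EReal) := by
    rw [← hicc.diag xb hxbdom]
    exact hfc
  -- Step 1: find the radius r
  have hU : IsOpen ((interior (edom f)) ×ˢ (interior (edom f))) :=
    isOpen_interior.prod isOpen_interior
  have hmemU : (xb, xb) ∈ (interior (edom f)) ×ˢ (interior (edom f)) := ⟨hxb, hxb⟩
  have hCA : ContinuousAt (fun p : En n × En n => fb p.1 p.2) (xb, xb) :=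
    hfb_cont.continuousAt (hU.mem_nhds hmemU)
  have hIoo : (Set.Ioo (((c - 1 : ℝ)) : EReal) (((c + 1 : ℝ)) : EReal)) ∈
      nhds (fb xb xb) := by
    rw [hfbcc]
    exact Ioo_mem_nhds (by exact_mod_cast (by linarith : c - 1 < c))
      (by exact_mod_cast (by linarith : c < c + 1))
  have hpre := hCA.preimage_mem_nhds hIoo
  obtain ⟨δ1, hδ1pos, hδ1⟩ := Metric.mem_nhds_iff.mp hpre
  obtain ⟨δ2, hδ2pos, hδ2⟩ := Metric.mem_nhds_iff.mp (hU.mem_nhds hmemU)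
  set r : ℝ := min δ1 δ2 / 9 with hrdef
  have hrpos : 0 < r := by
    rw [hrdef]
    have := lt_min hδ1pos hδ2pos
    positivity
  have hrs : 4*r < min δ1 δ2 := by
    rw [hrdef]
    have := lt_min hδ1pos hδ2pos
    linarith
  have hprod : ∀ z ∈ closedBall xb (4*r), ∀ x ∈ closedBall xb (4*r),
      ((z, x) : En n × En n) ∈ ball (xb, xb) (min δ1 δ2) := by
    intro z hz x hx
    rw [mem_ball, Prod.dist_eq]
    rw [mem_closedBall] at hz hx
    exact lt_of_le_of_lt (max_le hz hx) hrs
  have hIoomem : ∀ z ∈ closedBall xb (4*r), ∀ x ∈ closedBall xb (4*r),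
      fb z x ∈ Set.Ioo (((c - 1 : ℝ)) : EReal) (((c + 1 : ℝ)) : EReal) := by
    intro z hz x hx
    have h1 : ((z, x) : En n × En n) ∈ ball (xb, xb) δ1 := by
      have := hprod z hz x hx
      exact ball_subset_ball (min_le_left _ _) this
    exact hδ1 h1
  have hint : closedBall xb (4*r) ⊆ interior (edom f) := by
    intro z hz
    have h1 : ((z, z) : En n × En n) ∈ ball (xb, xb) δ2 := by
      have := hprod z hz z hz
      exact ball_subset_ball (min_le_right _ _) this
    exact (hδ2 h1).1
  have hfb_eq : ∀ z ∈ closedBall xb (4*r), ∀ x ∈ closedBall xb (4*r),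
      fb z x = (((fb z x).toReal : ℝ) : EReal) := by
    intro z hz x hx
    obtain ⟨h1, h2⟩ := hIoomem z hz x hx
    exact (EReal.coe_toReal (ne_top_of_lt h2) (ne_bot_of_gt h1)).symm
  have hFlb : ∀ z ∈ closedBall xb (4*r), ∀ x ∈ closedBall xb (4*r),
      c - 1 ≤ (fb z x).toReal := by
    intro z hz x hx
    obtain ⟨h1, -⟩ := hIoomem z hz x hx
    rw [hfb_eq z hz x hx] at h1
    exact (EReal.coe_lt_coe_iff.mp h1).le
  have hFub : ∀ z ∈ closedBall xb (4*r), ∀ x ∈ closedBall xb (4*r),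
      (fb z x).toReal ≤ c + 1 := by
    intro z hz x hx
    obtain ⟨-, h2⟩ := hIoomem z hz x hx
    rw [hfb_eq z hz x hx] at h2
    exact (EReal.coe_lt_coe_iff.mp h2).le
  -- Step 2: lower bound M
  obtain ⟨M0, hM0⟩ := hfb_bdd
  set M : ℝ := min M0 (c - 1) with hMdef
  have hMd : ∀ z ∈ edom f, ∀ x ∈ edom f, ((M : ℝ) : EReal) ≤ fb z x := by
    intro z hz x hx
    refine le_trans ?_ (hM0 z hz x hx)
    exact_mod_cast min_le_left M0 (c-1)
  -- Step 3: the Setup structure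
  set S : Setup n := {
    f := f, fb := fb, xb := xb, r := r, c := c, M := M,
    hr := hrpos, hfb_eq := hfb_eq, hFlb := hFlb, hFub := hFub, hcc := hfbcc,
    hdom := fun z hz => interior_subset (hint hz),
    hMd := hMd, htop := hicc.top_of_not_mem, hbot := hicc.bot_of_mem,
    hMc := min_le_right M0 (c-1),
    hcvz := hicc.convex_fst, hccx := hicc.concave_snd,
    hcont := hfb_cont, hint := hint } with hSdef
  have hgmax := S.gmax_pos
  have hLpos := S.hL
  have hr4 : (0:ℝ) < r/4 := by positivity
  have hevγ : ∀ᶠ kk in atTop, γ kk < S.gmax := hγ0.eventually_lt_const hgmax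
  have hA : IsClosed (eSubdiff (fun z => fb z xb) xb) :=
    Setup.eSubdiff_closed (fun z => fb z xb) xb c hfbcc
  have hB : IsClosed (eSubdiff (fun x => -(fb xb x)) xb) := by
    refine Setup.eSubdiff_closed (fun x => -(fb xb x)) xb (-c) ?_
    show -(fb xb xb) = (((-c : ℝ)) : EReal)
    rw [hfbcc, EReal.coe_neg]
  constructor
  · -- inclusion part
    intro u hu
    obtain ⟨xk, hxk, N, hN, vseq, hvmem, hvtend⟩ := hu
    by_contra hnot
    -- T = A - B is closed and convex
    have hTconv : Convex ℝ ((eSubdiff (fun z => fb z xb) xb) -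
        (eSubdiff (fun x => -(fb xb x)) xb)) :=
      (Setup.eSubdiff_convex _ _).sub (Setup.eSubdiff_convex _ _)
    have hTclosed : IsClosed ((eSubdiff (fun z => fb z xb) xb) -
        (eSubdiff (fun x => -(fb xb x)) xb)) := by
      apply IsSeqClosed.isClosed
      intro pseq p hpmem hptend
      choose aa haA bb hbB hab using (fun j => Set.mem_sub.mp (hpmem j))
      have haball : ∀ j, aa j ∈ closedBall (0 : En n) S.L := fun j =>
        mem_closedBall_zero_iff.mpr (S.boundedA (aa j) (haA j))
      obtain ⟨a0, -, φ, hφ, haconv⟩ :=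
        (isCompact_closedBall (0:En n) S.L).tendsto_subseq haball
      have hbconv : Tendsto (fun i => bb (φ i)) atTop (nhds (a0 - p)) := by
        have h1 : (fun i => bb (φ i)) = fun i => aa (φ i) - pseq (φ i) := by
          funext i
          rw [← hab (φ i)]
          abel
        rw [h1]
        exact haconv.sub (hptend.comp hφ.tendsto_atTop)
      have ha0 : a0 ∈ eSubdiff (fun z => fb z xb) xb :=
        hA.mem_of_tendsto haconv (Filter.Eventually.of_forall (fun i => haA (φ i)))
      have hb0 : a0 - p ∈ eSubdiff (fun x => -(fb xb x)) xb :=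
        hB.mem_of_tendsto hbconv (Filter.Eventually.of_forall (fun i => hbB (φ i)))
      have hpe : p = a0 - (a0 - p) := by abel
      rw [hpe]
      exact Set.sub_mem_sub ha0 hb0
    -- separation
    obtain ⟨φL, u', hφ1, hφ2⟩ := geometric_hahn_banach_closed_point hTconv hTclosed hnot
    set d : En n := (InnerProductSpace.toDual ℝ (En n)).symm φL with hddef
    have hdinner : ∀ q : En n, ⟪d, q⟫ = φL q := fun q =>
      InnerProductSpace.toDual_symm_apply
    set dn : En n := ‖d‖⁻¹ • d with hdndef
    have hdn1 : ‖dn‖ ≤ 1 := by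
      rcases eq_or_ne d 0 with h0 | h0
      · rw [hdndef, h0]
        simp
      · rw [hdndef, norm_smul, norm_inv, norm_norm,
          inv_mul_cancel₀ (norm_ne_zero_iff.mpr h0)]
    -- index bookkeeping
    have hNt : Tendsto N atTop atTop := hN.tendsto_atTop
    have hev : ∀ᶠ j in atTop, γ (N j) < S.gmax ∧ xk (N j) ∈ ball xb (r/4) :=
      hNt.eventually (hevγ.and (hxk.eventually_mem (ball_mem_nhds xb hr4)))
    obtain ⟨J, hJ⟩ := Filter.eventually_atTop.mp hev
    set kix : ℕ → ℕ := fun j => N (j + J) with hkdef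
    have hkcond : ∀ j, γ (kix j) < S.gmax ∧ xk (kix j) ∈ ball xb (r/4) :=
      fun j => hJ (j+J) (Nat.le_add_left J j)
    set xs : ℕ → En n := fun j => xk (kix j) with hxsdef
    set gs : ℕ → ℝ := fun j => γ (kix j) with hgsdef
    have hgs0 : ∀ j, 0 < gs j := fun j => hγpos _
    have hgsmax : ∀ j, gs j ≤ S.gmax := fun j => (hkcond j).1.le
    have hgshalf : ∀ j, gs j ≤ 1/2 := fun j => le_trans (hgsmax j) S.gmax_le_half
    have hxs : ∀ j, xs j ∈ ball xb (r/4) := fun j => (hkcond j).2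
    set ts : ℕ → ℝ := fun j => gs j * Real.sqrt (gs j) with htsdef
    have hts0 : ∀ j, 0 < ts j := fun j =>
      mul_pos (hgs0 j) (Real.sqrt_pos.mpr (hgs0 j))
    have hsqle1 : ∀ j, Real.sqrt (gs j) ≤ 1 := fun j =>
      Real.sqrt_le_one.mpr (by linarith [hgshalf j])
    have htsle : ∀ j, ts j ≤ gs j := fun j => by
      calc ts j = gs j * Real.sqrt (gs j) := rfl
        _ ≤ gs j * 1 := mul_le_mul_of_nonneg_left (hsqle1 j) (hgs0 j).le
        _ = gs j := mul_one _
    have htsle1 : ∀ j, ts j ≤ 1 := fun j => by linarith [htsle j, hgshalf j]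
    -- the decomposition of vseq
    have hform : ∀ j, ∃ w : En n, (w ∈ eSubdiff (pmeH fb (gs j)) (xs j)) ∧
        vseq (j + J) = (gs j)⁻¹ • (xs j) - w := by
      intro j
      obtain ⟨p, hp, q, hq, hpq⟩ := Set.mem_sub.mp (hvmem (j + J))
      exact ⟨q, hq, by rw [← hpq, Setup.uniqG (hgs0 j) hp]⟩
    choose ws hws hveq using hform
    -- apply the core lemma
    have hcore := fun j => S.core (gs j) (hgs0 j) (hgsmax j) (hxs j) (hts0 j)
      (htsle j) hdn1 (hws j).2
    choose ζs ss hζcb hζnear hsnorm hssub hprox hchain using hcore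
    set as : ℕ → En n := fun j => (gs j)⁻¹ • ((xs j - ts j • dn) - ζs j) with hasdef
    have hasbound : ∀ j, as j ∈ closedBall (0:En n) (2*S.L+1) := by
      intro j
      rw [mem_closedBall_zero_iff, hasdef]
      simp only
      rw [norm_smul, norm_inv, Real.norm_eq_abs, abs_of_pos (hgs0 j),
        show (xs j - ts j • dn) - ζs j = -(ζs j - (xs j - ts j • dn)) by abel, norm_neg,
        inv_mul_le_iff₀ (hgs0 j)]
      calc ‖ζs j - (xs j - ts j • dn)‖ ≤ (2*S.L+1)*gs j := hζnear j
        _ = gs j * (2*S.L+1) := by ring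
    have hssball : ∀ j, ss j ∈ closedBall (0:En n) S.L := fun j =>
      mem_closedBall_zero_iff.mpr (hsnorm j)
    obtain ⟨⟨a0, s0⟩, -, φ, hφ, hpconv⟩ :=
      (((isCompact_closedBall (0:En n) (2*S.L+1))).prod
        (isCompact_closedBall (0:En n) S.L)).tendsto_subseq
        (fun j => Set.mk_mem_prod (hasbound j) (hssball j))
    have haconv : Tendsto (fun i => as (φ i)) atTop (nhds a0) :=
      (continuous_fst.tendsto (a0, s0)).comp hpconv
    have hsconv : Tendsto (fun i => ss (φ i)) atTop (nhds s0) :=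
      (continuous_snd.tendsto (a0, s0)).comp hpconv
    -- limits
    have hkt : Tendsto kix atTop atTop := hNt.comp (tendsto_add_atTop_nat J)
    have hφt : Tendsto φ atTop atTop := hφ.tendsto_atTop
    have hgst : Tendsto gs atTop (nhds 0) := hγ0.comp hkt
    have hgsφ : Tendsto (fun i => gs (φ i)) atTop (nhds 0) := hgst.comp hφt
    have hsqφ : Tendsto (fun i => Real.sqrt (gs (φ i))) atTop (nhds 0) := by
      have h1 := (Real.continuous_sqrt.tendsto 0).comp hgsφ
      simpa [Function.comp_def] using h1
    have htsφ : Tendsto (fun i => ts (φ i)) atTop (nhds 0) := by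
      have := hgsφ.mul hsqφ
      simpa using this
    have hxsφ : Tendsto (fun i => xs (φ i)) atTop (nhds xb) := (hxk.comp hkt).comp hφt
    have hysφ : Tendsto (fun i => xs (φ i) - ts (φ i) • dn) atTop (nhds xb) := by
      have h1 : Tendsto (fun i => ts (φ i) • dn) atTop (nhds ((0:ℝ) • dn)) :=
        htsφ.smul_const dn
      rw [zero_smul] at h1
      have := hxsφ.sub h1
      simpa using this
    have hζφ : Tendsto (fun i => ζs (φ i)) atTop (nhds xb) := by
      have h1 : Tendsto (fun i => ζs (φ i) - (xs (φ i) - ts (φ i) • dn)) atTop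
          (nhds 0) := by
        apply squeeze_zero_norm (fun i => hζnear (φ i))
        have := hgsφ.const_mul (2*S.L+1)
        simpa using this
      have := h1.add hysφ
      simpa using this
    -- ball memberships
    have hys2 : ∀ i, (xs (φ i) - ts (φ i) • dn) ∈ closedBall xb (r/2) := by
      intro i
      rw [mem_closedBall, dist_eq_norm]
      have h1 : ‖xs (φ i) - xb‖ < r/4 := by
        rw [← dist_eq_norm]; exact hxs (φ i)
      calc ‖xs (φ i) - ts (φ i) • dn - xb‖ = ‖(xs (φ i) - xb) - ts (φ i) • dn‖ := by
            congr 1; abel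
        _ ≤ ‖xs (φ i) - xb‖ + ‖ts (φ i) • dn‖ := norm_sub_le _ _
        _ ≤ r/4 + ts (φ i) * 1 := by
            refine add_le_add h1.le ?_
            rw [norm_smul, Real.norm_eq_abs, abs_of_pos (hts0 (φ i))]
            exact mul_le_mul_of_nonneg_left hdn1 (hts0 (φ i)).le
        _ ≤ r/4 + gs (φ i) := by linarith [htsle (φ i)]
        _ ≤ r/4 + r/4 := by linarith [le_trans (hgsmax (φ i)) S.gmax_le_r4]
        _ = r/2 := by ring
    have hys4 : ∀ i, (xs (φ i) - ts (φ i) • dn) ∈ closedBall xb (4*r) := fun i =>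
      closedBall_subset_closedBall (by linarith) (hys2 i)
    have hζs4 : ∀ i, ζs (φ i) ∈ closedBall xb (4*r) := fun i =>
      closedBall_subset_closedBall (by linarith) (hζcb (φ i))
    have hxb4 : xb ∈ closedBall xb (4*r) := mem_closedBall_self (by linarith)
    -- a0 is a subgradient of fb · xb at xb
    have ha0A : a0 ∈ eSubdiff (fun z => fb z xb) xb := by
      apply S.globA
      intro z hz
      have hz2 : z ∈ closedBall xb (2*r) :=
        closedBall_subset_closedBall (by linarith) (ball_subset_closedBall hz)
      have hz4 : z ∈ closedBall xb (4*r) :=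
        closedBall_subset_closedBall (by linarith) (ball_subset_closedBall hz)
      have hFζy : Tendsto (fun i => S.F (ζs (φ i)) (xs (φ i) - ts (φ i) • dn)) atTop
          (nhds (S.F xb xb)) := S.Fcont hζs4 hys4 hxb4 hxb4 hζφ hysφ
      have hFzy : Tendsto (fun i => S.F z (xs (φ i) - ts (φ i) • dn)) atTop
          (nhds (S.F z xb)) :=
        S.Fcont (fun _ => hz4) hys4 hz4 hxb4 tendsto_const_nhds hysφ
      have hinnerconv : Tendsto (fun i => (⟪as (φ i), z - ζs (φ i)⟫ : ℝ)) atTop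
          (nhds (⟪a0, z - xb⟫ : ℝ)) := haconv.inner (tendsto_const_nhds.sub hζφ)
      have herr1 : Tendsto (fun i => ts (φ i)*‖z - ζs (φ i)‖^2/(2*gs (φ i))) atTop
          (nhds 0) := by
        have heq : (fun i => ts (φ i)*‖z - ζs (φ i)‖^2/(2*gs (φ i)))
            = fun i => Real.sqrt (gs (φ i))*(‖z - ζs (φ i)‖^2)/2 := by
          funext i
          show gs (φ i) * Real.sqrt (gs (φ i))*‖z - ζs (φ i)‖^2/(2*gs (φ i)) = _
          field_simp [(hgs0 (φ i)).ne']
        rw [heq]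
        have h2 : Tendsto (fun i => ‖z - ζs (φ i)‖^2) atTop (nhds (‖z - xb‖^2)) :=
          ((tendsto_const_nhds.sub hζφ).norm).pow 2
        have := (hsqφ.mul h2).div_const 2
        simpa using this
      have herr2 : ∀ i, (gs (φ i))^2/(ts (φ i)) = Real.sqrt (gs (φ i)) := by
        intro i
        have hss : Real.sqrt (gs (φ i)) * Real.sqrt (gs (φ i)) = gs (φ i) :=
          Real.mul_self_sqrt (hgs0 (φ i)).le
        rw [div_eq_iff (hts0 (φ i)).ne']
        show (gs (φ i))^2 = Real.sqrt (gs (φ i)) * (gs (φ i) * Real.sqrt (gs (φ i)))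
        calc (gs (φ i))^2 = gs (φ i) * (Real.sqrt (gs (φ i)) * Real.sqrt (gs (φ i))) := by
              rw [hss]; ring
          _ = Real.sqrt (gs (φ i)) * (gs (φ i) * Real.sqrt (gs (φ i))) := by ring
      have hineq : ∀ i, S.F (ζs (φ i)) (xs (φ i) - ts (φ i) • dn)
          + ⟪as (φ i), z - ζs (φ i)⟫
          - ts (φ i)*‖z - ζs (φ i)‖^2/(2*gs (φ i)) - (gs (φ i))^2/(ts (φ i))
          ≤ S.F z (xs (φ i) - ts (φ i) • dn) := fun i =>
        hprox (φ i) z hz2 (ts (φ i)) (hts0 (φ i)) (htsle1 (φ i))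
      have hlhs : Tendsto (fun i => S.F (ζs (φ i)) (xs (φ i) - ts (φ i) • dn)
          + ⟪as (φ i), z - ζs (φ i)⟫
          - ts (φ i)*‖z - ζs (φ i)‖^2/(2*gs (φ i)) - (gs (φ i))^2/(ts (φ i))) atTop
          (nhds (S.F xb xb + ⟪a0, z - xb⟫ - 0 - 0)) := by
        refine Filter.Tendsto.sub (Filter.Tendsto.sub (hFζy.add hinnerconv) herr1) ?_
        have : (fun i => (gs (φ i))^2/(ts (φ i)))
            = fun i => Real.sqrt (gs (φ i)) := funext herr2
        rw [this]
        exact hsqφ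
      have hfin := le_of_tendsto_of_tendsto' hlhs hFzy hineq
      have hFcc : S.F xb xb = c := S.hcc'
      rw [hFcc] at hfin
      have : S.c = c := rfl
      rw [this]
      linarith [hfin]
    -- s0 is a subgradient of -(fb xb ·) at xb
    have hs0B : s0 ∈ eSubdiff (fun x => -(fb xb x)) xb := by
      apply S.globB
      intro x' hx'
      have hx'2 : x' ∈ closedBall xb (2*r) :=
        closedBall_subset_closedBall (by linarith) (ball_subset_closedBall hx')
      have hx'4 : x' ∈ closedBall xb (4*r) :=
        closedBall_subset_closedBall (by linarith) (ball_subset_closedBall hx')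
      have hFζy : Tendsto (fun i => S.F (ζs (φ i)) (xs (φ i) - ts (φ i) • dn)) atTop
          (nhds (S.F xb xb)) := S.Fcont hζs4 hys4 hxb4 hxb4 hζφ hysφ
      have hFζx' : Tendsto (fun i => S.F (ζs (φ i)) x') atTop (nhds (S.F xb x')) :=
        S.Fcont hζs4 (fun _ => hx'4) hxb4 hx'4 hζφ tendsto_const_nhds
      have hinnerconv : Tendsto (fun i => (⟪ss (φ i), x' - (xs (φ i) - ts (φ i) • dn)⟫ : ℝ))
          atTop (nhds (⟪s0, x' - xb⟫ : ℝ)) :=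
        hsconv.inner (tendsto_const_nhds.sub hysφ)
      have hineq : ∀ i, -(S.F (ζs (φ i)) (xs (φ i) - ts (φ i) • dn))
          + ⟪ss (φ i), x' - (xs (φ i) - ts (φ i) • dn)⟫ ≤ -(S.F (ζs (φ i)) x') :=
        fun i => hssub (φ i) x' hx'2
      have hlhs : Tendsto (fun i => -(S.F (ζs (φ i)) (xs (φ i) - ts (φ i) • dn))
          + ⟪ss (φ i), x' - (xs (φ i) - ts (φ i) • dn)⟫) atTop
          (nhds (-(S.F xb xb) + ⟪s0, x' - xb⟫)) := (hFζy.neg).add hinnerconv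
      have hrhs : Tendsto (fun i => -(S.F (ζs (φ i)) x')) atTop
          (nhds (-(S.F xb x'))) := hFζx'.neg
      have hfin := le_of_tendsto_of_tendsto' hlhs hrhs hineq
      have hFcc : S.F xb xb = c := S.hcc'
      rw [hFcc] at hfin
      have : S.c = c := rfl
      rw [this]
      linarith [hfin]
    -- the limiting inequality in direction dn
    have hfin : (⟪u, dn⟫ : ℝ) ≤ ⟪a0 - s0, dn⟫ := by
      have hineq : ∀ i, (⟪vseq (φ i + J), dn⟫ : ℝ)
          ≤ ⟪as (φ i) - ss (φ i), dn⟫ + Real.sqrt (gs (φ i)) + Real.sqrt (gs (φ i)) := by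
        intro i
        have h1 := hchain (φ i)
        have htg : ts (φ i)/(gs (φ i)) = Real.sqrt (gs (φ i)) := by
          show gs (φ i) * Real.sqrt (gs (φ i))/(gs (φ i)) = _
          rw [mul_comm, mul_div_assoc, div_self (hgs0 (φ i)).ne', mul_one]
        have herr2 : (gs (φ i))^2/(ts (φ i)) = Real.sqrt (gs (φ i)) := by
          have hss : Real.sqrt (gs (φ i)) * Real.sqrt (gs (φ i)) = gs (φ i) :=
            Real.mul_self_sqrt (hgs0 (φ i)).le
          rw [div_eq_iff (hts0 (φ i)).ne']
          show (gs (φ i))^2 = Real.sqrt (gs (φ i)) * (gs (φ i) * Real.sqrt (gs (φ i)))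
          calc (gs (φ i))^2 = gs (φ i) * (Real.sqrt (gs (φ i)) * Real.sqrt (gs (φ i))) := by
                rw [hss]; ring
            _ = Real.sqrt (gs (φ i)) * (gs (φ i) * Real.sqrt (gs (φ i))) := by ring
        rw [htg, herr2] at h1
        rw [hveq (φ i)]
        exact h1
      have hlhs : Tendsto (fun i => (⟪vseq (φ i + J), dn⟫ : ℝ)) atTop
          (nhds (⟪u, dn⟫ : ℝ)) := by
        have h1 : Tendsto (fun i => φ i + J) atTop atTop :=
          tendsto_atTop_mono (fun i => Nat.le_add_right (φ i) J) hφt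
        exact (hvtend.comp h1).inner tendsto_const_nhds
      have hrhs : Tendsto (fun i => (⟪as (φ i) - ss (φ i), dn⟫ : ℝ)
          + Real.sqrt (gs (φ i)) + Real.sqrt (gs (φ i))) atTop
          (nhds (⟪a0 - s0, dn⟫ + 0 + 0)) :=
        (((haconv.sub hsconv).inner tendsto_const_nhds).add hsqφ).add hsqφ
      have := le_of_tendsto_of_tendsto' hlhs hrhs hineq
      linarith [this]
    -- contradiction with separation
    have hp : a0 - s0 ∈ (eSubdiff (fun z => fb z xb) xb) -
        (eSubdiff (fun x => -(fb xb x)) xb) := Set.sub_mem_sub ha0A hs0B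
    have h1 := hφ1 _ hp
    have h2 := hφ2
    have hud : (⟪u, d⟫ : ℝ) ≤ ⟪a0 - s0, d⟫ := by
      rcases eq_or_ne d 0 with h0 | h0
      · rw [h0]
        simp
      · have hnd : ‖d‖ ≠ 0 := norm_ne_zero_iff.mpr h0
        have h3 : (⟪u, dn⟫ : ℝ) = ‖d‖⁻¹ * ⟪u, d⟫ := by
          rw [hdndef, real_inner_smul_right]
        have h4 : (⟪a0 - s0, dn⟫ : ℝ) = ‖d‖⁻¹ * ⟪a0 - s0, d⟫ := by
          rw [hdndef, real_inner_smul_right]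
        rw [h3, h4] at hfin
        have h5 := mul_le_mul_of_nonneg_left hfin (norm_nonneg d)
        rw [← mul_assoc, ← mul_assoc, mul_inv_cancel₀ hnd, one_mul, one_mul] at h5
        exact h5
    have hφu : φL u = ⟪u, d⟫ := by rw [← hdinner u, real_inner_comm]
    have hφp : φL (a0 - s0) = ⟪a0 - s0, d⟫ := by rw [← hdinner (a0 - s0), real_inner_comm]
    rw [hφu] at h2
    rw [hφp] at h1
    linarith [h1, h2, hud]
  · -- horizon part
    apply Set.eq_singleton_iff_unique_mem.mpr
    constructor
    · exact ⟨fun _ => xb, tendsto_const_nhds, Set.mem_insert _ _⟩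
    · intro u hu
      obtain ⟨xk, hxk, hul⟩ := hu
      rcases Set.mem_insert_iff.mp hul with h0 |
        ⟨N, hN, lam, hlampos, hlamanti, hlam0, wseq, hwmem, hwconv⟩
      · exact h0
      · have hNt : Tendsto N atTop atTop := hN.tendsto_atTop
        have hev1 : ∀ᶠ j in atTop, γ (N j) < S.gmax := hNt.eventually hevγ
        have hev2 : ∀ᶠ j in atTop, xk (N j) ∈ ball xb (r/4) :=
          hNt.eventually (hxk.eventually_mem (ball_mem_nhds xb hr4))
        have hbnd : ∀ᶠ j in atTop, ‖wseq j‖ ≤ 3*S.L + 3 := by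
          filter_upwards [hev1, hev2] with j h1 h2
          obtain ⟨p, hp, q, hq, hpq⟩ := Set.mem_sub.mp (hwmem j)
          have hp' : p = (γ (N j))⁻¹ • (xk (N j)) := Setup.uniqG (hγpos (N j)) hp
          have hwb := S.bound (γ (N j)) (hγpos (N j)) h1.le h2 hq
          rw [← hpq, hp']
          exact hwb
        have hlim : Tendsto (fun j => lam j • wseq j) atTop (nhds (0:En n)) := by
          have h1 : ∀ᶠ j in atTop, ‖lam j • wseq j‖ ≤ lam j * (3*S.L+3) := by
            filter_upwards [hbnd] with j hj
            rw [norm_smul, Real.norm_eq_abs, abs_of_pos (hlampos j)]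
            exact mul_le_mul_of_nonneg_left hj (hlampos j).le
          have h2 : Tendsto (fun j => lam j * (3*S.L+3)) atTop (nhds 0) := by
            have := hlam0.mul_const (3*S.L+3)
            simpa using this
          exact squeeze_zero_norm' h1 h2
        exact tendsto_nhds_unique hwconv hlim
end
end

section
/- Let φ: ℝ → ℝ ∪ {+∞} be a proper, lsc, convex function. Then there exist a proper, lsc, convex, nondecreasing function φ↑: ℝ → ℝ ∪ {+∞} and a proper, lsc, convex, nonincreasing function φ↓: ℝ → ℝ ∪ {+∞} such that φ = φ↑ + φ↓. In addition, if int(dom φ) ≠ ∅, then ∂φ(z) = ∂φ↑(z) + ∂φ↓(z) for every z ∈ dom φ, where ∂ denotes the convex subdifferential and the sum is Minkowski addition of sets. -/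
open Filter Topology Set
open scoped Pointwise

noncomputable section

/-- Effective domain of an extended-real-valued function on ℝ. -/
def edom1 (φ : ℝ → EReal) : Set ℝ := {t | φ t < ⊤}

/-- Properness of an extended-real-valued function on ℝ. -/
def Proper1 (φ : ℝ → EReal) : Prop := (∃ t, φ t < ⊤) ∧ ∀ t, φ t ≠ ⊥

/-- Convexity of an extended-real-valued function on ℝ. -/
def EConvex1 (φ : ℝ → EReal) : Prop :=
  ∀ s t : ℝ, ∀ a b : ℝ, 0 ≤ a → 0 ≤ b → a + b = 1 →
    φ (a * s + b * t) ≤ (a : EReal) * φ s + (b : EReal) * φ t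

/-- The convex subdifferential of an extended-real-valued function on ℝ
(empty outside of the effective domain). -/
def eSubdiff1 (φ : ℝ → EReal) (t : ℝ) : Set ℝ :=
  {y | φ t ≠ ⊤ ∧ ∀ s : ℝ, φ t + ((y * (s - t) : ℝ) : EReal) ≤ φ s}

/- ### Auxiliary lemmas -/

lemma sub_le_sub_const' {X Y : EReal} {y : ℝ} (h : X + (y:ℝ) ≤ Y) (c : ℝ) :
    (X - (c:EReal)) + (y:ℝ) ≤ Y - (c:EReal) := by
  rw [sub_eq_add_neg, add_right_comm, ← sub_eq_add_neg]
  exact EReal.sub_le_sub h le_rfl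

lemma add_le_of_sub_le' {X Y : EReal} {y c : ℝ} (h : (X - (c:EReal)) + (y:ℝ) ≤ Y - (c:EReal)) :
    X + (y:ℝ) ≤ Y := by
  have h2 := add_le_add_left h (c : EReal)
  rwa [EReal.sub_add_cancel, add_right_comm, EReal.sub_add_cancel] at h2

lemma add_coe_nonpos_le {X : EReal} {y : ℝ} (hy : y ≤ 0) : X + (y:ℝ) ≤ X := by
  calc X + (y:ℝ) ≤ X + (0:ℝ) := add_le_add_right (EReal.coe_le_coe_iff.2 hy) X
    _ = X := by norm_num

lemma coe_nonpos_of_add_le {a x : ℝ} {B : EReal} (h : (a:EReal) + (x:ℝ) ≤ B) (hB : B ≤ (a:EReal)) :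
    x ≤ 0 := by
  have : ((a + x : ℝ) : EReal) ≤ (a : EReal) := by
    rw [EReal.coe_add]; exact h.trans hB
  have := EReal.coe_le_coe_iff.1 this
  linarith

lemma mul_add_coe' (a : ℝ) (ha : 0 ≤ a) (x : EReal) (hx : x ≠ ⊥) (r : ℝ) :
    (a : EReal) * (x + (r:ℝ)) = (a:EReal) * x + ((a*r : ℝ) : EReal) := by
  induction x with
  | bot => simp at hx
  | coe x => norm_cast; ring
  | top =>
    rcases ha.eq_or_lt with h | h
    · subst h; simp
    · rw [EReal.top_add_coe, EReal.coe_mul_top_of_pos h, EReal.top_add_coe]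

lemma mono_right' {φ : ℝ → EReal} {m : ℝ} (hconv : EConvex1 φ) (hmin : ∀ s, φ m ≤ φ s) :
    ∀ u v, m ≤ u → u ≤ v → φ u ≤ φ v := by
  intro u v hmu huv
  rcases eq_or_lt_of_le (hmu.trans huv) with h | h
  · have : u = v := le_antisymm huv (h ▸ hmu)
    exact this ▸ le_rfl
  · set a := (v - u) / (v - m) with ha
    set b := (u - m) / (v - m) with hb
    have hvm : 0 < v - m := by linarith
    have ha0 : 0 ≤ a := by rw [ha]; apply div_nonneg <;> linarith
    have hb0 : 0 ≤ b := by rw [hb]; apply div_nonneg <;> linarith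
    have hab : a + b = 1 := by rw [ha, hb]; field_simp; ring
    have hu : a * m + b * v = u := by rw [ha, hb]; field_simp; ring
    calc φ u = φ (a * m + b * v) := by rw [hu]
      _ ≤ (a:EReal) * φ m + (b:EReal) * φ v := hconv m v a b ha0 hb0 hab
      _ ≤ (a:EReal) * φ v + (b:EReal) * φ v := by
          exact add_le_add_left (mul_le_mul_of_nonneg_left (hmin v) (EReal.coe_nonneg.2 ha0)) _
      _ = ((a + b : ℝ) : EReal) * φ v := by
          rw [EReal.coe_add, EReal.right_distrib_of_nonneg (EReal.coe_nonneg.2 ha0) (EReal.coe_nonneg.2 hb0)]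
      _ = φ v := by rw [hab]; norm_num

lemma anti_left' {φ : ℝ → EReal} {m : ℝ} (hconv : EConvex1 φ) (hmin : ∀ s, φ m ≤ φ s) :
    ∀ u v, u ≤ v → v ≤ m → φ v ≤ φ u := by
  intro u v huv hvm
  rcases eq_or_lt_of_le (huv.trans hvm) with h | h
  · have : u = v := le_antisymm huv (by rw [h]; exact hvm)
    exact this ▸ le_rfl
  · set a := (v - u) / (m - u) with ha
    set b := (m - v) / (m - u) with hb
    have hmu : 0 < m - u := by linarith
    have ha0 : 0 ≤ a := by rw [ha]; apply div_nonneg <;> linarith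
    have hb0 : 0 ≤ b := by rw [hb]; apply div_nonneg <;> linarith
    have hab : a + b = 1 := by rw [ha, hb]; field_simp; ring
    have hv : a * m + b * u = v := by rw [ha, hb]; field_simp; ring
    calc φ v = φ (a * m + b * u) := by rw [hv]
      _ ≤ (a:EReal) * φ m + (b:EReal) * φ u := hconv m u a b ha0 hb0 hab
      _ ≤ (a:EReal) * φ u + (b:EReal) * φ u := by
          exact add_le_add_left (mul_le_mul_of_nonneg_left (hmin u) (EReal.coe_nonneg.2 ha0)) _
      _ = ((a + b : ℝ) : EReal) * φ u := by
          rw [EReal.coe_add, EReal.right_distrib_of_nonneg (EReal.coe_nonneg.2 ha0) (EReal.coe_nonneg.2 hb0)]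
      _ = φ u := by rw [hab]; norm_num

lemma conv_max' {φ : ℝ → EReal} {m : ℝ} (hconv : EConvex1 φ) (hmin : ∀ s, φ m ≤ φ s) :
    EConvex1 (fun t => φ (max t m)) := by
  intro s t a b ha hb hab
  simp only
  calc φ (max (a*s + b*t) m) ≤ φ (a * max s m + b * max t m) := by
        apply mono_right' hconv hmin _ _ (le_max_right _ _)
        apply max_le
        · have h1 : a * s ≤ a * max s m := by nlinarith [le_max_left s m]
          have h2 : b * t ≤ b * max t m := by nlinarith [le_max_left t m]
          linarith
        · have h1 := mul_le_mul_of_nonneg_left (le_max_right s m) ha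
          have h2 := mul_le_mul_of_nonneg_left (le_max_right t m) hb
          have h3 : a*m + b*m = m := by linear_combination m * hab
          linarith
    _ ≤ (a:EReal) * φ (max s m) + (b:EReal) * φ (max t m) := hconv _ _ a b ha hb hab

lemma conv_min' {φ : ℝ → EReal} {m : ℝ} (hconv : EConvex1 φ) (hmin : ∀ s, φ m ≤ φ s) :
    EConvex1 (fun t => φ (min t m)) := by
  intro s t a b ha hb hab
  simp only
  calc φ (min (a*s + b*t) m) ≤ φ (a * min s m + b * min t m) := by
        apply anti_left' hconv hmin _ _ _ (min_le_right _ _)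
        apply le_min
        · have h1 : a * min s m ≤ a * s := by nlinarith [min_le_left s m]
          have h2 : b * min t m ≤ b * t := by nlinarith [min_le_left t m]
          linarith
        · have h1 := mul_le_mul_of_nonneg_left (min_le_right s m) ha
          have h2 := mul_le_mul_of_nonneg_left (min_le_right t m) hb
          have h3 : a*m + b*m = m := by linear_combination m * hab
          linarith
    _ ≤ (a:EReal) * φ (min s m) + (b:EReal) * φ (min t m) := hconv _ _ a b ha hb hab

lemma econvex_sub_const' {φ : ℝ → EReal} (hconv : EConvex1 φ) (hbot : ∀ t, φ t ≠ ⊥) (c : ℝ) :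
    EConvex1 (fun t => φ t - (c:EReal)) := by
  intro s t a b ha hb hab
  simp only [sub_eq_add_neg, ← EReal.coe_neg]
  calc φ (a*s + b*t) + ((-c : ℝ) : EReal)
      ≤ ((a:EReal) * φ s + (b:EReal) * φ t) + ((-c:ℝ) : EReal) :=
        add_le_add_left (hconv s t a b ha hb hab) _
    _ = ((a:EReal) * φ s + ((a * -c : ℝ):EReal)) + ((b:EReal) * φ t + ((b * -c : ℝ):EReal)) := by
        rw [add_add_add_comm, ← EReal.coe_add]
        congr 2
        linear_combination c * hab
    _ = (a:EReal) * (φ s + ((-c:ℝ):EReal)) + (b:EReal) * (φ t + ((-c:ℝ):EReal)) := by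
        rw [mul_add_coe' a ha _ (hbot s), mul_add_coe' b hb _ (hbot t)]

lemma lsc_comp' {φ : ℝ → EReal} (hlsc : LowerSemicontinuous φ) {g : ℝ → ℝ} (hg : Continuous g) :
    LowerSemicontinuous (fun t => φ (g t)) :=
  fun x y hy => (hg.tendsto x).eventually (hlsc (g x) y hy)

lemma lsc_sub_const' {φ : ℝ → EReal} (hlsc : LowerSemicontinuous φ) (c : ℝ) :
    LowerSemicontinuous (fun t => φ t - (c:EReal)) := by
  intro x y hy
  have h1 : y + (c:EReal) < φ x := by
    have := EReal.add_lt_add_right_coe hy c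
    rwa [EReal.sub_add_cancel] at this
  filter_upwards [hlsc x _ h1] with t ht
  have := EReal.add_lt_add_right_coe ht (-c)
  rw [add_assoc, ← EReal.coe_add] at this
  simpa [sub_eq_add_neg, ← EReal.coe_neg] using this

lemma exists_min_Icc' {φ : ℝ → EReal} (hlsc : LowerSemicontinuous φ) {l r : ℝ} (hlr : l ≤ r) :
    ∃ m ∈ Icc l r, ∀ t ∈ Icc l r, φ m ≤ φ t := by
  have hne : (Icc l r).Nonempty := ⟨l, le_rfl, hlr⟩
  haveI : Nonempty (Icc l r) := hne.to_subtype
  set K : Icc l r → Set ℝ := fun s => Icc l r ∩ {t | φ t ≤ φ s} with hK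
  have hcl : ∀ s, IsClosed (K s) := fun s =>
    isClosed_Icc.inter (hlsc.isClosed_preimage (φ s))
  have hcp : ∀ s, IsCompact (K s) := fun s => isCompact_Icc.inter_right
    (hlsc.isClosed_preimage (φ s))
  have hnon : ∀ s, (K s).Nonempty := fun s => ⟨s, s.2, mem_setOf.mpr le_rfl⟩
  have hdir : Directed (· ⊇ ·) K := by
    intro s₁ s₂
    rcases le_total (φ s₁) (φ s₂) with h | h
    · exact ⟨s₁, fun t ht => ht, fun t ht => ⟨ht.1, ht.2.trans h⟩⟩
    · exact ⟨s₂, fun t ht => ⟨ht.1, ht.2.trans h⟩, fun t ht => ht⟩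
  obtain ⟨m, hm⟩ := IsCompact.nonempty_iInter_of_directed_nonempty_isCompact_isClosed
    K hdir hnon hcp hcl
  simp only [mem_iInter] at hm
  refine ⟨m, (hm ⟨l, le_rfl, hlr⟩).1, fun t ht => (hm ⟨t, ht⟩).2⟩

lemma exists_global_min' {φ : ℝ → EReal} (hproper : Proper1 φ)
    (hlsc : LowerSemicontinuous φ) (hconv : EConvex1 φ)
    {a b c d : ℝ} (hab : a ≤ b) (hba : φ b < φ a) (hcd : c ≤ d) (hdc : φ c < φ d) :
    ∃ m, ∀ t, φ m ≤ φ t := by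
  have hab' : a < b := hab.lt_of_ne (by rintro rfl; exact lt_irrefl _ hba)
  have hcd' : c < d := hcd.lt_of_ne (by rintro rfl; exact lt_irrefl _ hdc)
  set l := min a c with hl
  set r := max b d with hr
  have hlr : l ≤ r := le_trans (min_le_left a c) (hab.trans (le_max_left b d))
  obtain ⟨m, hmI, hmin⟩ := exists_min_Icc' hlsc hlr
  have haI : a ∈ Icc l r := ⟨min_le_left a c, hab.trans (le_max_left b d)⟩
  have hbI : b ∈ Icc l r := ⟨(min_le_left a c).trans hab, le_max_left b d⟩
  have hcI : c ∈ Icc l r := ⟨min_le_right a c, hcd.trans (le_max_right b d)⟩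
  have hdI : d ∈ Icc l r := ⟨(min_le_right a c).trans hcd, le_max_right b d⟩
  refine ⟨m, fun t => ?_⟩
  rcases le_or_gt t r with htr | htr
  · rcases le_or_gt l t with hlt | hlt
    · exact hmin t ⟨hlt, htr⟩
    · by_contra hcon
      push_neg at hcon
      have hta : t < a := lt_of_lt_of_le hlt (min_le_left a c)
      have htb : t < b := hta.trans hab'
      set α := (b - a) / (b - t) with hα
      set β := (a - t) / (b - t) with hβ
      have hbt : 0 < b - t := by linarith
      have hα0 : 0 < α := by rw [hα]; apply div_pos <;> linarith
      have hβ0 : 0 < β := by rw [hβ]; apply div_pos <;> linarith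
      have hαβ : α + β = 1 := by rw [hα, hβ]; field_simp; ring
      have hcomb : α * t + β * b = a := by rw [hα, hβ]; field_simp; ring
      have hest := hconv t b α β hα0.le hβ0.le hαβ
      rw [hcomb] at hest
      have h1 : φ t < φ b := hcon.trans_le (hmin b hbI)
      have hbne : φ b ≠ ⊤ := hba.ne_top
      have htne : φ t ≠ ⊤ := h1.ne_top
      lift φ b to ℝ using ⟨hbne, hproper.2 b⟩ with bv hbv
      lift φ t to ℝ using ⟨htne, hproper.2 t⟩ with tv htv
      have htb' : tv < bv := by exact_mod_cast h1
      have : φ a ≤ ((α * tv + β * bv : ℝ) : EReal) := by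
        rw [EReal.coe_add, EReal.coe_mul, EReal.coe_mul]; exact hest
      have hlt2 : ((α * tv + β * bv : ℝ) : EReal) < ((bv : ℝ) : EReal) := by
        apply EReal.coe_lt_coe_iff.2
        have k1 := mul_lt_mul_of_pos_left htb' hα0
        have k2 : α*bv + β*bv = bv := by linear_combination bv*hαβ
        linarith
      exact lt_irrefl _ (hba.trans (this.trans_lt hlt2))
  · by_contra hcon
    push_neg at hcon
    have hdt : d < t := lt_of_le_of_lt (le_max_right b d) htr
    have hct : c < t := hcd'.trans hdt
    set α := (t - d) / (t - c) with hα
    set β := (d - c) / (t - c) with hβ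
    have htc : 0 < t - c := by linarith
    have hα0 : 0 < α := by rw [hα]; apply div_pos <;> linarith
    have hβ0 : 0 < β := by rw [hβ]; apply div_pos <;> linarith
    have hαβ : α + β = 1 := by rw [hα, hβ]; field_simp; ring
    have hcomb : α * c + β * t = d := by rw [hα, hβ]; field_simp; ring
    have hest := hconv c t α β hα0.le hβ0.le hαβ
    rw [hcomb] at hest
    have h1 : φ t < φ c := hcon.trans_le (hmin c hcI)
    have hcne : φ c ≠ ⊤ := hdc.ne_top
    have htne : φ t ≠ ⊤ := h1.ne_top
    lift φ c to ℝ using ⟨hcne, hproper.2 c⟩ with cv hcv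
    lift φ t to ℝ using ⟨htne, hproper.2 t⟩ with tv htv
    have htc' : tv < cv := by exact_mod_cast h1
    have h2 : φ d ≤ ((α * cv + β * tv : ℝ) : EReal) := by
      rw [EReal.coe_add, EReal.coe_mul, EReal.coe_mul]; exact hest
    have hlt2 : ((α * cv + β * tv : ℝ) : EReal) < ((cv : ℝ) : EReal) := by
      apply EReal.coe_lt_coe_iff.2
      have k1 := mul_lt_mul_of_pos_left htc' hβ0
      have k2 : α*cv + β*cv = cv := by linear_combination cv*hαβ
      linarith
    exact lt_irrefl _ (hdc.trans (h2.trans_lt hlt2))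

lemma subdiff_zero' (z : ℝ) : eSubdiff1 (fun _ => (0:EReal)) z = {0} := by
  ext y
  simp only [eSubdiff1, mem_setOf_eq, mem_singleton_iff]
  constructor
  · rintro ⟨-, h⟩
    have h1 : y * ((z+1) - z) ≤ 0 := EReal.coe_nonpos.1 (by simpa using h (z+1))
    have h2 : y * ((z-1) - z) ≤ 0 := EReal.coe_nonpos.1 (by simpa using h (z-1))
    nlinarith
  · rintro rfl
    exact ⟨by simp, fun s => by simp⟩

lemma subdiff_eq' {φ : ℝ → EReal} {m : ℝ} (hproper : Proper1 φ)
    (hmin : ∀ s, φ m ≤ φ s) {c : ℝ} (hc : φ m = (c:ℝ))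
    {z : ℝ} (hz : φ z < ⊤) :
    eSubdiff1 φ z =
      eSubdiff1 (fun t => φ (max t m)) z
        + eSubdiff1 (fun t => φ (min t m) - (c:EReal)) z := by
  obtain ⟨zv, hzv⟩ : ∃ v : ℝ, φ z = (v:ℝ) :=
    ⟨(φ z).toReal, (EReal.coe_toReal hz.ne (hproper.2 z)).symm⟩
  have hmaxle : φ (max z m) ≤ φ z := by
    rcases le_total z m with h | h
    · rw [max_eq_right h]; exact hmin z
    · rw [max_eq_left h]
  have hminle : φ (min z m) ≤ φ z := by
    rcases le_total z m with h | h
    · rw [min_eq_left h]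
    · rw [min_eq_right h]; exact hmin z
  ext g
  constructor
  · rintro ⟨hne, hg⟩
    have hsign : g * (m - z) ≤ 0 := by
      have h2 := hg m
      rw [hzv, hc] at h2
      exact coe_nonpos_of_add_le h2 (by rw [← hzv, ← hc]; exact hmin z)
    have hgpos : m < z → 0 ≤ g := fun h => by nlinarith
    have hgneg : z < m → g ≤ 0 := fun h => by nlinarith
    refine Set.mem_add.2 ⟨max g 0, ⟨?_, ?_⟩, min g 0, ⟨?_, ?_⟩, by rw [max_add_min, add_zero]⟩
    · exact (hmaxle.trans_lt hz).ne
    · intro s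
      show φ (max z m) + ((max g 0 * (s - z) : ℝ) : EReal) ≤ φ (max s m)
      rcases lt_trichotomy z m with hzm | hzm | hzm
      · rw [max_eq_right hzm.le, max_eq_right (hgneg hzm)]
        simpa using hmin (max s m)
      · subst hzm
        rw [max_self]
        rcases le_or_gt s z with hsz | hsz
        · rw [max_eq_right hsz]
          exact add_coe_nonpos_le
            (mul_nonpos_of_nonneg_of_nonpos (le_max_right g 0) (by linarith))
        · rw [max_eq_left hsz.le]
          rcases le_or_gt g 0 with hg0 | hg0
          · rw [max_eq_right hg0]; simpa using hmin s
          · rw [max_eq_left hg0.le]; exact hg s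
      · rw [max_eq_left hzm.le, max_eq_left (hgpos hzm)]
        rcases le_or_gt m s with hms | hms
        · rw [max_eq_left hms]; exact hg s
        · rw [max_eq_right hms.le]
          calc φ z + ((g * (s - z) : ℝ) : EReal) ≤ φ z + ((g * (m - z) : ℝ) : EReal) := by
                apply add_le_add_right (EReal.coe_le_coe_iff.2 ?_)
                nlinarith [hgpos hzm]
            _ ≤ φ m := hg m
    · intro htop
      simp only at htop
      have hle : φ (min z m) - (c:EReal) ≤ ((zv - c : ℝ) : EReal) := by
        rw [EReal.coe_sub, ← hzv]
        exact EReal.sub_le_sub hminle le_rfl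
      rw [htop, top_le_iff] at hle
      exact EReal.coe_ne_top _ hle
    · intro s
      show (φ (min z m) - (c:EReal)) + ((min g 0 * (s - z) : ℝ) : EReal) ≤ φ (min s m) - (c:EReal)
      apply sub_le_sub_const'
      rcases lt_trichotomy z m with hzm | hzm | hzm
      · rw [min_eq_left hzm.le, min_eq_left (hgneg hzm)]
        rcases le_or_gt s m with hsm | hsm
        · rw [min_eq_left hsm]; exact hg s
        · rw [min_eq_right hsm.le]
          calc φ z + ((g * (s - z) : ℝ) : EReal) ≤ φ z + ((g * (m - z) : ℝ) : EReal) := by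
                apply add_le_add_right (EReal.coe_le_coe_iff.2 ?_)
                nlinarith [hgneg hzm]
            _ ≤ φ m := hg m
      · subst hzm
        rw [min_self]
        rcases le_or_gt s z with hsz | hsz
        · rw [min_eq_left hsz]
          rcases le_or_gt g 0 with hg0 | hg0
          · rw [min_eq_left hg0]; exact hg s
          · rw [min_eq_right hg0.le]; simpa using hmin s
        · rw [min_eq_right hsz.le]
          exact add_coe_nonpos_le
            (mul_nonpos_of_nonpos_of_nonneg (min_le_right g 0) (by linarith))
      · rw [min_eq_right hzm.le, min_eq_right (hgpos hzm)]
        simpa using hmin (min s m)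
  · intro hmem
    obtain ⟨gu, ⟨hune, hu⟩, gd, ⟨hdne, hd⟩, rfl⟩ := Set.mem_add.1 hmem
    simp only at hu hd
    have hd' : ∀ s, φ (min z m) + ((gd * (s - z) : ℝ) : EReal) ≤ φ (min s m) :=
      fun s => add_le_of_sub_le' (hd s)
    obtain ⟨av, hav⟩ : ∃ v : ℝ, φ (max z m) = (v:ℝ) :=
      ⟨(φ (max z m)).toReal, (EReal.coe_toReal hune (hproper.2 _)).symm⟩
    obtain ⟨bv, hbv⟩ : ∃ v : ℝ, φ (min z m) = (v:ℝ) :=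
      ⟨(φ (min z m)).toReal, (EReal.coe_toReal (hminle.trans_lt hz).ne (hproper.2 _)).symm⟩
    have hgu0 : 0 ≤ gu := by
      have h2 := hu (min z m - 1)
      rw [max_eq_right (by linarith [min_le_right z m] : min z m - 1 ≤ m), hav, hc] at h2
      have hx := coe_nonpos_of_add_le h2 (by rw [← hc, ← hav]; exact hmin _)
      nlinarith [min_le_left z m]
    have hgd0 : gd ≤ 0 := by
      have h2 := hd' (max z m + 1)
      rw [min_eq_right (by linarith [le_max_right z m] : m ≤ max z m + 1), hbv, hc] at h2
      have hx := coe_nonpos_of_add_le h2 (by rw [← hc, ← hbv]; exact hmin _)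
      nlinarith [le_max_left z m]
    refine ⟨hz.ne, fun s => ?_⟩
    rcases lt_trichotomy z m with hzm | hzm | hzm
    · have hgu : gu = 0 := by
        have h2 := hu m
        rw [max_eq_right hzm.le, max_self, hc] at h2
        have hx := coe_nonpos_of_add_le h2 le_rfl
        nlinarith
      rw [hgu, zero_add]
      rcases le_or_gt s m with hsm | hsm
      · have := hd' s
        rwa [min_eq_left hzm.le, min_eq_left hsm] at this
      · calc φ z + ((gd * (s - z) : ℝ) : EReal) ≤ φ z + ((gd * (m - z) : ℝ) : EReal) := by
              apply add_le_add_right (EReal.coe_le_coe_iff.2 ?_)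
              nlinarith
          _ ≤ φ m := by
              have := hd' m
              rwa [min_eq_left hzm.le, min_self] at this
          _ ≤ φ s := hmin s
    · subst hzm
      rcases le_or_gt s z with hsz | hsz
      · calc φ z + (((gu + gd) * (s - z) : ℝ) : EReal)
            ≤ φ z + ((gd * (s - z) : ℝ) : EReal) := by
              apply add_le_add_right (EReal.coe_le_coe_iff.2 ?_)
              nlinarith
          _ ≤ φ s := by
              have := hd' s
              rwa [min_self, min_eq_left hsz] at this
      · calc φ z + (((gu + gd) * (s - z) : ℝ) : EReal)
            ≤ φ z + ((gu * (s - z) : ℝ) : EReal) := by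
              apply add_le_add_right (EReal.coe_le_coe_iff.2 ?_)
              nlinarith
          _ ≤ φ s := by
              have := hu s
              rwa [max_self, max_eq_left hsz.le] at this
    · have hgd : gd = 0 := by
        have h2 := hd' m
        rw [min_eq_right hzm.le, min_self, hc] at h2
        have hx := coe_nonpos_of_add_le h2 le_rfl
        nlinarith
      rw [hgd, add_zero]
      rcases le_or_gt m s with hms | hms
      · have := hu s
        rwa [max_eq_left hzm.le, max_eq_left hms] at this
      · calc φ z + ((gu * (s - z) : ℝ) : EReal) ≤ φ z + ((gu * (m - z) : ℝ) : EReal) := by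
              apply add_le_add_right (EReal.coe_le_coe_iff.2 ?_)
              nlinarith
          _ ≤ φ m := by
              have := hu m
              rwa [max_eq_left hzm.le, max_self] at this
          _ ≤ φ s := hmin s

/-- monotonic decomposition of univariate convex functions.
Every proper, lsc, convex `φ : ℝ → ℝ ∪ {+∞}` is the sum of a proper, lsc, convex,
nondecreasing function `φ↑` and a proper, lsc, convex, nonincreasing function `φ↓`;
moreover, if `int (dom φ) ≠ ∅` then `∂φ(z) = ∂φ↑(z) + ∂φ↓(z)` for every `z ∈ dom φ`. -/
theorem stmt7 (φ : ℝ → EReal) (hproper : Proper1 φ)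
    (hlsc : LowerSemicontinuous φ) (hconv : EConvex1 φ) :
    ∃ φu φd : ℝ → EReal,
      Proper1 φu ∧ LowerSemicontinuous φu ∧ EConvex1 φu ∧ Monotone φu ∧
      Proper1 φd ∧ LowerSemicontinuous φd ∧ EConvex1 φd ∧ Antitone φd ∧
      (∀ t, φ t = φu t + φd t) ∧
      ((interior (edom1 φ)).Nonempty →
        ∀ z ∈ edom1 φ, eSubdiff1 φ z = eSubdiff1 φu z + eSubdiff1 φd z) := by
  have hproper0 : Proper1 (fun _ : ℝ => (0:EReal)) :=
    ⟨⟨0, by norm_num⟩, fun t => by norm_num⟩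
  have hconv0 : EConvex1 (fun _ : ℝ => (0:EReal)) := by
    intro s t a b ha hb hab
    simp
  by_cases hmono : Monotone φ
  · refine ⟨φ, fun _ => 0, hproper, hlsc, hconv, hmono,
      hproper0, lowerSemicontinuous_const, hconv0, antitone_const,
      fun t => (add_zero _).symm, fun _ z _ => ?_⟩
    rw [subdiff_zero']
    simp [Set.add_singleton]
  by_cases hanti : Antitone φ
  · refine ⟨fun _ => 0, φ, hproper0, lowerSemicontinuous_const, hconv0, monotone_const,
      hproper, hlsc, hconv, hanti,
      fun t => (zero_add _).symm, fun _ z _ => ?_⟩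
    rw [subdiff_zero']
    simp [Set.singleton_add]
  -- main case: φ is neither monotone nor antitone, so it has a global minimizer
  obtain ⟨a, b, hab, hba⟩ : ∃ a b : ℝ, a ≤ b ∧ φ b < φ a := by
    by_contra hcon
    push_neg at hcon
    exact hmono fun x y h => not_lt.1 (hcon x y h).not_gt
  obtain ⟨c', d, hcd, hdc⟩ : ∃ c d : ℝ, c ≤ d ∧ φ c < φ d := by
    by_contra hcon
    push_neg at hcon
    exact hanti fun x y h => not_lt.1 (hcon x y h).not_gt
  obtain ⟨m, hmin⟩ := exists_global_min' hproper hlsc hconv hab hba hcd hdc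
  have hmtop : φ m < ⊤ := lt_of_le_of_lt (hmin b) (lt_of_lt_of_le hba le_top)
  obtain ⟨c, hc⟩ : ∃ v : ℝ, φ m = (v:ℝ) :=
    ⟨(φ m).toReal, (EReal.coe_toReal hmtop.ne (hproper.2 m)).symm⟩
  refine ⟨fun t => φ (max t m), fun t => φ (min t m) - (c:EReal), ?_, ?_, ?_, ?_, ?_, ?_, ?_, ?_, ?_, ?_⟩
  · exact ⟨⟨m, by simpa [max_self] using hmtop⟩, fun t => hproper.2 _⟩
  · exact lsc_comp' hlsc (continuous_id.max continuous_const)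
  · exact conv_max' hconv hmin
  · exact fun u v huv => mono_right' hconv hmin _ _ (le_max_right u m) (max_le_max huv le_rfl)
  · constructor
    · refine ⟨m, ?_⟩
      simp only [min_self, hc, ← EReal.coe_sub]
      exact EReal.coe_lt_top _
    · intro t hbot
      simp only at hbot
      have h0 : ((c - c : ℝ):EReal) ≤ φ (min t m) - (c:EReal) := by
        rw [EReal.coe_sub]
        exact EReal.sub_le_sub (hc ▸ hmin (min t m)) le_rfl
      rw [hbot, le_bot_iff] at h0
      exact EReal.coe_ne_bot _ h0
  · exact lsc_sub_const' (lsc_comp' hlsc (continuous_id.min continuous_const)) c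
  · exact econvex_sub_const' (conv_min' hconv hmin) (fun t => hproper.2 _) c
  · intro u v huv
    exact EReal.sub_le_sub
      (anti_left' hconv hmin _ _ (min_le_min huv le_rfl) (min_le_right v m)) le_rfl
  · intro t
    show φ t = φ (max t m) + (φ (min t m) - (c:EReal))
    rcases le_total t m with h | h
    · rw [max_eq_right h, min_eq_left h, hc, add_comm, EReal.sub_add_cancel]
    · rw [max_eq_left h, min_eq_right h, hc, ← EReal.coe_sub, sub_self]
      norm_num
  · exact fun _ z hz => subdiff_eq' hproper hmin hc hz
end
end

section
/- Consider problem (CP₁) solved by the prox-ADC method, and suppose Assumptions 1–4 hold. Then: (a) the strongly convex subproblem defining x^{k,i+1} is feasible for every k, i ∈ ℕ; and (b) the stopping rule of the inner loop is achieved in finitely many steps, i.e., for every k the smallest integer i_k satisfying the inner termination conditions is finite. -/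
open Filter Topology Metric Set
open scoped Pointwise RealInnerProductSpace Classical

noncomputable section

/-- Regular (Fréchet) subdifferential of an extended-real-valued function. -/
def regSubdiff {n : ℕ} (f : En n → EReal) (xb : En n) : Set (En n) :=
  {v | ∃ r : ℝ, f xb = (r : EReal) ∧ ∀ ε : ℝ, 0 < ε → ∃ δ : ℝ, 0 < δ ∧
      ∀ x : En n, ‖x - xb‖ ≤ δ →
        ((r + ⟪v, x - xb⟫ - ε * ‖x - xb‖ : ℝ) : EReal) ≤ f x}

/-- Limiting (Mordukhovich) subdifferential. -/
def limSubdiff {n : ℕ} (f : En n → EReal) (xb : En n) : Set (En n) :=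
  {v | ∃ (xk vk : ℕ → En n), (∀ k, vk k ∈ regSubdiff f (xk k)) ∧
      Tendsto xk atTop (nhds xb) ∧
      Tendsto (fun k => f (xk k)) atTop (nhds (f xb)) ∧
      Tendsto vk atTop (nhds v)}

/-- Horizon subdifferential. -/
def horSubdiff {n : ℕ} (f : En n → EReal) (xb : En n) : Set (En n) :=
  insert 0 {v | ∃ (xk vk : ℕ → En n) (lam : ℕ → ℝ),
      (∀ k, vk k ∈ regSubdiff f (xk k)) ∧
      Tendsto xk atTop (nhds xb) ∧ Tendsto (fun k => f (xk k)) atTop (nhds (f xb)) ∧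
      (∀ k, 0 < lam k) ∧ Antitone lam ∧ Tendsto lam atTop (nhds 0) ∧
      Tendsto (fun k => lam k • vk k) atTop (nhds v)}

/-- Convex subdifferential of a real-valued function on ℝⁿ. -/
def convSubdiff {n : ℕ} (f : En n → ℝ) (x : En n) : Set (En n) :=
  {v | ∀ y, f x + ⟪v, y - x⟫ ≤ f y}

/-- The approximate subdifferential of an ADC function, associated with real-valued
convex DC decomposition sequences `g`, `h`. -/
def approxSubdiff {n : ℕ} (g h : ℕ → En n → ℝ) (xb : En n) : Set (En n) :=
  {v | ∃ xk : ℕ → En n, Tendsto xk atTop (nhds xb) ∧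
        v ∈ OuterLim (fun k => convSubdiff (g k) (xk k) - convSubdiff (h k) (xk k))}

/-- The approximate horizon subdifferential, real-valued decompositions. -/
def approxHorSubdiff {n : ℕ} (g h : ℕ → En n → ℝ) (xb : En n) : Set (En n) :=
  {v | ∃ xk : ℕ → En n, Tendsto xk atTop (nhds xb) ∧
        v ∈ HorizonLim (fun k => convSubdiff (g k) (xk k) - convSubdiff (h k) (xk k))}

/-- Clarke subdifferential of a (locally Lipschitz) real-valued function:
the convex hull of the limiting subdifferential. -/
def clarkeSubdiff {n : ℕ} (f : En n → ℝ) (xb : En n) : Set (En n) :=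
  convexHull ℝ (limSubdiff (fun x => ((f x : ℝ) : EReal)) xb)

/-- Convex normal cone of a set `C ⊆ ℝ` at `t` (empty if `t ∉ C`). -/
def nc1 (C : Set ℝ) (t : ℝ) : Set ℝ := {v | t ∈ C ∧ ∀ s ∈ C, v * (s - t) ≤ 0}

/-- `φu`, `φd` form a monotonic decomposition of a univariate convex function `φ`. -/
def IsMonoDecomp (φ φu φd : ℝ → EReal) : Prop :=
  Proper1 φu ∧ LowerSemicontinuous φu ∧ EConvex1 φu ∧ Monotone φu ∧
  Proper1 φd ∧ LowerSemicontinuous φd ∧ EConvex1 φd ∧ Antitone φd ∧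
  (∀ t, φ t = φu t + φd t) ∧ (Monotone φ → ∀ t, φd t = 0)

/-- The set `T_p(x̄)` of limits of values `f_p^k(x^k)` along subsequences, over sequences
`x^k → x̄`. -/
def Tset {n : ℕ} (fk : ℕ → En n → ℝ) (xb : En n) : Set ℝ :=
  {t | ∃ xk : ℕ → En n, Tendsto xk atTop (nhds xb) ∧
      ∃ N : ℕ → ℕ, StrictMono N ∧ Tendsto (fun j => fk (N j) (xk (N j))) atTop (nhds t)}

/-- **Assumption 1** for the composite problem: for each `p`, `f_p` is e-ADC associated with
`{f_p^k = g_p^k - h_p^k}` with `g_p^k, h_p^k` real-valued convex on ℝⁿ; the values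
`f_p^k(x')` are locally eventually bounded; and `φ_p ∘ f_p^k` epi-converges to `φ_p ∘ f_p`. -/
def Assump1 {n m : ℕ} (φ : Fin m → ℝ → EReal) (f : Fin m → En n → ℝ)
    (g h : Fin m → ℕ → En n → ℝ) : Prop :=
  ∀ p : Fin m,
    (∀ k, ConvexOn ℝ Set.univ (g p k) ∧ ConvexOn ℝ Set.univ (h p k)) ∧
    EpiConv (fun k x => ((g p k x - h p k x : ℝ) : EReal))
      (fun x => ((f p x : ℝ) : EReal)) ∧
    (∀ x : En n,
      (⊥ : EReal) < Filter.liminf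
          (fun q : En n × ℕ => ((g p q.2 q.1 - h p q.2 q.1 : ℝ) : EReal))
          ((nhds x) ×ˢ atTop) ∧
      Filter.limsup
          (fun q : En n × ℕ => ((g p q.2 q.1 - h p q.2 q.1 : ℝ) : EReal))
          ((nhds x) ×ˢ atTop) < (⊤ : EReal)) ∧
    EpiConv (fun k x => φ p (g p k x - h p k x)) (fun x => φ p (f p x))

/-- `x̄` is an A-stationary point of the composite problem `min Σ_p φ_p(f_p(x))`,
relative to the ADC decompositions `{g_p^k, h_p^k}`. -/
def AStationary {n m : ℕ} (φ : Fin m → ℝ → EReal) (g h : Fin m → ℕ → En n → ℝ)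
    (xb : En n) : Prop :=
  ∃ (y : Fin m → ℝ) (v : Fin m → En n),
    (∀ p : Fin m,
      (∃ t ∈ Tset (fun k x => g p k x - h p k x) xb, y p ∈ eSubdiff1 (φ p) t) ∧
      (v p ∈ y p • approxSubdiff (g p) (h p) xb ∨
        v p ∈ (approxHorSubdiff (g p) (h p) xb ∪ -approxHorSubdiff (g p) (h p) xb) \ {0})) ∧
    ∑ p, v p = 0

/-- `x̄` is a weakly A-stationary point of the composite problem `min Σ_p φ_p(f_p(x))`,
relative to the ADC decompositions `{g_p^k, h_p^k}` and the monotonic decompositions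
`φ_p = φu_p + φd_p`. -/
def WeaklyAStationary {n m : ℕ} (φu φd : Fin m → ℝ → EReal) (g h : Fin m → ℕ → En n → ℝ)
    (xb : En n) : Prop :=
  ∃ (t : Fin m → ℝ) (y1 y2 : Fin m → ℝ) (v : Fin m → En n),
    (∀ p : Fin m,
      t p ∈ Tset (fun k x => g p k x - h p k x) xb ∧
      y1 p ∈ eSubdiff1 (φu p) (t p) ∧ y2 p ∈ eSubdiff1 (φd p) (t p) ∧
      (v p ∈ (y1 p • approxSubdiff (g p) (h p) xb + y2 p • approxSubdiff (g p) (h p) xb) ∨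
        v p ∈ (approxHorSubdiff (g p) (h p) xb ∪ -approxHorSubdiff (g p) (h p) xb) \ {0})) ∧
    ∑ p, v p = 0

/-- The Euclidean-type norm of a multiplier vector `(y_{p,1}, y_{p,2})_{p=1}^m`. -/
def ynorm {m : ℕ} (y : Fin m → ℝ × ℝ) : ℝ :=
  Real.sqrt (∑ p, ((y p).1 ^ 2 + (y p).2 ^ 2))

/-- All the data of problem (CP₁) and of the prox-ADC method: the outer convex functions
`φ_p` with monotonic decompositions `φ_p = φu_p + φd_p`, the inner functions `f_p` with
ADC decompositions `f_p^k = g_p^k - h_p^k`, the constants `α̂_p^k`, `ℓ_k`, `λ`, `ε_k`,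
`δ_k`, the initial point `x⁰`, the inner iterates `X k i = x^{k,i}`, the subgradient
selections `aSel p k i ∈ ∂h_p^k(x^{k,i})`, `bSel p k i ∈ ∂g_p^k(x^{k,i})`, and the inner
stopping indices `iK k = i_k`. -/
structure CP1 (n m m₁ : ℕ) where
  φ : Fin m → ℝ → EReal
  φu : Fin m → ℝ → EReal
  φd : Fin m → ℝ → EReal
  f : Fin m → En n → ℝ
  g : Fin m → ℕ → En n → ℝ
  h : Fin m → ℕ → En n → ℝ
  αh : Fin m → ℕ → ℝ
  ell : ℕ → ℝ
  lam : ℝ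
  eps : ℕ → ℝ
  del : ℕ → ℝ
  x0 : En n
  X : ℕ → ℕ → En n
  aSel : Fin m → ℕ → ℕ → En n
  bSel : Fin m → ℕ → ℕ → En n
  iK : ℕ → ℕ

namespace CP1

variable {n m m₁ : ℕ} (D : CP1 n m m₁)

/-- The approximating functions `f_p^k = g_p^k - h_p^k`. -/
def fk (p : Fin m) (k : ℕ) (x : En n) : ℝ := D.g p k x - D.h p k x

/-- Structure of the outer functions in (CP₁): `φ_p` is real-valued convex for `p ≤ m₁`
and equals the indicator `δ_{(-∞,0]}` for `p > m₁`. -/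
def PhiOK : Prop :=
  (∀ p : Fin m, (p : ℕ) < m₁ →
    (∀ t, D.φ p t ≠ ⊤ ∧ D.φ p t ≠ ⊥) ∧ EConvex1 (D.φ p)) ∧
  (∀ p : Fin m, m₁ ≤ (p : ℕ) →
    D.φ p = fun t => if t ≤ 0 then (0 : EReal) else ⊤)

/-- The monotonic decompositions `φ_p = φu_p + φd_p` are valid. -/
def DecompOK : Prop := ∀ p, IsMonoDecomp (D.φ p) (D.φu p) (D.φd p)

/-- Assumption 1 for the data of (CP₁). -/
def A1 : Prop := Assump1 D.φ D.f D.g D.h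

/-- The feasible set `X^k` of the `k`-th approximating constraints. -/
def Xfeas (k : ℕ) : Set (En n) := {x | ∀ p : Fin m, m₁ ≤ (p : ℕ) → D.fk p k x ≤ 0}

/-- The tail sums `Σ_{k' ≥ k} α̂_p^{k'}`. -/
def tail (p : Fin m) (k : ℕ) : ℝ := ∑' j : ℕ, D.αh p (k + j)

/-- **Assumption 2** (strict feasibility). -/
def A2 : Prop :=
  (∀ p k, 0 ≤ D.αh p k) ∧ (∀ p, Summable (D.αh p)) ∧
  (∀ p : Fin m, (p : ℕ) < m₁ → ∀ k, D.αh p k = 0) ∧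
  (∀ p : Fin m, m₁ ≤ (p : ℕ) → ∀ k, ∀ x ∈ D.Xfeas k,
    D.fk p (k + 1) x - D.fk p k x ≤ D.αh p k) ∧
  (∀ p : Fin m, m₁ ≤ (p : ℕ) → D.fk p 0 D.x0 ≤ -(∑' j : ℕ, D.αh p j))

/-- **Assumption 3** (Hausdorff-Lipschitz continuity of `∂g_p^k` or `∂h_p^k`). -/
def A3 : Prop := ∀ k : ℕ, 0 < D.ell k ∧ ∀ (p : Fin m) (x x' : En n),
  min (Metric.hausdorffDist (convSubdiff (D.g p k) x) (convSubdiff (D.g p k) x'))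
      (Metric.hausdorffDist (convSubdiff (D.h p k) x) (convSubdiff (D.h p k) x'))
    ≤ D.ell k * ‖x - x'‖

/-- **Assumption 4** (level-boundedness of `H^k = Σ_p φ_p ∘ f_p^k`). -/
def A4 : Prop := ∀ (k : ℕ) (r : ℝ),
  Bornology.IsBounded {x : En n | (∑ p, D.φ p (D.fk p k x)) ≤ (r : EReal)}

/-- **Assumption 5** (asymptotic constraint qualification). -/
def A5 : Prop := ∀ xb : En n, (∀ p, D.φ p (D.f p xb) ≠ ⊤) →
  ∀ (y : Fin m → ℝ) (v : Fin m → En n),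
    (∀ p : Fin m,
      ((∃ t ∈ Tset (D.fk p) xb, y p ∈ nc1 (edom1 (D.φ p)) t) ∧
        v p ∈ convexHull ℝ (approxSubdiff (D.g p) (D.h p) xb)) ∨
      v p ∈ approxHorSubdiff (D.g p) (D.h p) xb \ {0}) →
    ∑ p, y p • v p = 0 → ∀ p, y p = 0

/-- The algorithmic parameters `λ, ε_k, δ_k` are admissible. -/
def ParamsOK : Prop :=
  0 < D.lam ∧ (∀ k, 0 < D.eps k ∧ 0 < D.del k) ∧
  Antitone D.eps ∧ Antitone D.del ∧
  Tendsto D.eps atTop (nhds 0) ∧ Tendsto D.del atTop (nhds 0) ∧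
  Antitone (fun k => D.del k / (D.lam + D.ell k)) ∧
  Tendsto (fun k => D.del k / (D.lam + D.ell k)) atTop (nhds 0)

/-- The upper surrogate `f_p^{k,upper}(x; x^{k,i})`. -/
def Fupper (p : Fin m) (k i : ℕ) (x : En n) : ℝ :=
  D.g p k x - D.h p k (D.X k i) - ⟪D.aSel p k i, x - D.X k i⟫ + D.tail p k

/-- The lower surrogate `f_p^{k,lower}(x; x^{k,i})`. -/
def Flower (p : Fin m) (k i : ℕ) (x : En n) : ℝ :=
  D.g p k (D.X k i) + ⟪D.bSel p k i, x - D.X k i⟫ - D.h p k x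

/-- The feasible set of the convex subproblem at inner iteration `(k,i)`. -/
def Cons (k i : ℕ) : Set (En n) :=
  {x | ∀ p : Fin m, m₁ ≤ (p : ℕ) → D.Fupper p k i x ≤ 0}

/-- The objective of the strongly convex subproblem at inner iteration `(k,i)`. -/
def Obj (k i : ℕ) (x : En n) : EReal :=
  (∑ p : Fin m, if (p : ℕ) < m₁ then
      D.φu p (D.Fupper p k i x) + D.φd p (D.Flower p k i x) else 0)
  + ((D.lam / 2 * ‖x - D.X k i‖ ^ 2 : ℝ) : EReal)

/-- The inner-loop stopping conditions at inner iteration `(k,i)`. -/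
def Stop (k i : ℕ) : Prop :=
  (∀ p : Fin m,
    D.Fupper p k i (D.X k (i + 1)) ≤ D.fk p k (D.X k (i + 1)) + D.tail p k + D.eps k) ∧
  (∀ p : Fin m, ¬ Monotone (D.φ p) →
    D.fk p k (D.X k (i + 1)) - D.eps k ≤ D.Flower p k i (D.X k (i + 1))) ∧
  ‖D.X k (i + 1) - D.X k i‖ ≤ D.del k / (D.lam + D.ell k)

/-- The iterates follow the prox-ADC method: the initial point is `x⁰`, the subgradient
selections are valid, `x^{k,i+1}` solves the convex subproblem (whenever feasible), and
each new outer iterate is `x^{k+1} = x^{k, i_k}`. -/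
def IterOK : Prop :=
  D.X 0 0 = D.x0 ∧
  (∀ (p : Fin m) (k i : ℕ),
    D.aSel p k i ∈ convSubdiff (D.h p k) (D.X k i) ∧
    D.bSel p k i ∈ convSubdiff (D.g p k) (D.X k i)) ∧
  (∀ k i : ℕ, (D.Cons k i).Nonempty →
    D.X k (i + 1) ∈ D.Cons k i ∧
      ∀ x ∈ D.Cons k i, D.Obj k i (D.X k (i + 1)) ≤ D.Obj k i x) ∧
  (∀ k : ℕ, D.X (k + 1) 0 = D.X k (D.iK k))

/-- The inner loop of the prox-ADC method terminates at `i_k`, the first index satisfying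
the stopping conditions. -/
def StopOK : Prop := ∀ k : ℕ, D.Stop k (D.iK k) ∧ ∀ i < D.iK k, ¬ D.Stop k i

/-- `∂f_p^{k,upper}(·; x^{k,i})`, the convex subdifferential of the upper surrogate. -/
def dFupper (p : Fin m) (k i : ℕ) (x : En n) : Set (En n) :=
  convSubdiff (D.g p k) x - {D.aSel p k i}

/-- `∂f_p^{k,lower}(·; x^{k,i})`, the (super)differential of the lower surrogate. -/
def dFlower (p : Fin m) (k i : ℕ) (x : En n) : Set (En n) :=
  {D.bSel p k i} - convSubdiff (D.h p k) x

/-- The set `Y^k(x^{k+1})` of KKT multipliers of the subproblem at `(x^{k,i_k}, x^{k,i_k+1})`. -/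
def Yset (k : ℕ) : Set (Fin m → ℝ × ℝ) :=
  {y | (∀ p : Fin m,
      (y p).1 ∈ eSubdiff1 (D.φu p) (D.Fupper p k (D.iK k) (D.X k (D.iK k + 1))) ∧
      (y p).2 ∈ eSubdiff1 (D.φd p) (D.Flower p k (D.iK k) (D.X k (D.iK k + 1)))) ∧
    ∃ v w : Fin m → En n,
      (∀ p : Fin m,
        v p ∈ D.dFupper p k (D.iK k) (D.X k (D.iK k + 1)) ∧
        w p ∈ D.dFlower p k (D.iK k) (D.X k (D.iK k + 1))) ∧
      (0 : En n) = ∑ p, ((y p).1 • v p + (y p).2 • w p)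
        + D.lam • (D.X k (D.iK k + 1) - D.X k (D.iK k))}

/-- The generic upper surrogate `f_p^{k,upper}(x; x')` built from a subgradient
`a ∈ ∂h_p^k(x')`. -/
def FupGen (p : Fin m) (k : ℕ) (x' a x : En n) : ℝ :=
  D.g p k x - D.h p k x' - ⟪a, x - x'⟫ + D.tail p k

/-- The generic lower surrogate `f_p^{k,lower}(x; x')` built from a subgradient
`b ∈ ∂g_p^k(x')`. -/
def FloGen (p : Fin m) (k : ℕ) (x' b x : En n) : ℝ :=
  D.g p k x' + ⟪b, x - x'⟫ - D.h p k x

/-- The generic feasible set of the subproblem at `x'`. -/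
def ConsGen (k : ℕ) (x' : En n) (a : Fin m → En n) : Set (En n) :=
  {x | ∀ p : Fin m, m₁ ≤ (p : ℕ) → D.FupGen p k x' (a p) x ≤ 0}

/-- The generic objective of the subproblem at `x'`. -/
def ObjGen (k : ℕ) (x' : En n) (a b : Fin m → En n) (x : En n) : EReal :=
  (∑ p : Fin m, if (p : ℕ) < m₁ then
      D.φu p (D.FupGen p k x' (a p) x) + D.φd p (D.FloGen p k x' (b p) x) else 0)
  + ((D.lam / 2 * ‖x - x'‖ ^ 2 : ℝ) : EReal)

/-- **Assumption 6** (non-asymptotic constraint qualification). -/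
def A6 : Prop := ∀ (k : ℕ) (x' x'' : En n) (a b : Fin m → En n),
  (∀ p, a p ∈ convSubdiff (D.h p k) x' ∧ b p ∈ convSubdiff (D.g p k) x') →
  x'' ∈ D.ConsGen k x' a →
  (∀ x ∈ D.ConsGen k x' a, D.ObjGen k x' a b x'' ≤ D.ObjGen k x' a b x) →
  ∀ (y : Fin m → ℝ) (v : Fin m → En n),
    (∀ p : Fin m, (p : ℕ) < m₁ → y p = 0) →
    (∀ p : Fin m, m₁ ≤ (p : ℕ) →
      y p ∈ nc1 (Set.Iic (0 : ℝ)) (D.FupGen p k x' (a p) x'') ∧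
      v p ∈ (convSubdiff (D.g p k) x'' - {a p})) →
    ∑ p, y p • v p = 0 →
    ∀ p : Fin m, y p = 0

/-- The equi-boundedness constant `D = sup_k sup {‖y‖ : y ∈ Y^k(x^{k+1})}`. -/
def Dsup : ℝ :=
  sSup {r : ℝ | ∃ (k : ℕ) (y : Fin m → ℝ × ℝ), y ∈ D.Yset k ∧ r = ynorm y}

end CP1


section AuxProof

variable {n m m₁ : ℕ}

lemma ereal_coe_sum {ι : Type*} (s : Finset ι) (f : ι → ℝ) :
    ((∑ p ∈ s, f p : ℝ) : EReal) = ∑ p ∈ s, ((f p : ℝ) : EReal) := by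
  classical
  induction s using Finset.induction with
  | empty => simp
  | insert _ _ h ih => rw [Finset.sum_insert h, Finset.sum_insert h, EReal.coe_add, ih]

lemma subgrad_norm_bound {f : En n → ℝ} (hc : Continuous f) {R : ℝ} (hR : 0 ≤ R) :
    ∃ K : ℝ, 0 ≤ K ∧ ∀ x : En n, ‖x‖ ≤ R → ∀ v ∈ convSubdiff f x, ‖v‖ ≤ K := by
  have hcomp : IsCompact (closedBall (0 : En n) (R + 1)) := isCompact_closedBall _ _
  have hne : (closedBall (0 : En n) (R + 1)).Nonempty :=
    ⟨0, mem_closedBall_self (by linarith)⟩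
  obtain ⟨zmax, hzmax, hmax⟩ := hcomp.exists_isMaxOn hne hc.continuousOn
  obtain ⟨zmin, hzmin, hmin⟩ := hcomp.exists_isMinOn hne hc.continuousOn
  refine ⟨f zmax - f zmin, sub_nonneg.2 (isMinOn_iff.mp hmin _ hzmax), ?_⟩
  intro x hx v hv
  rcases eq_or_ne v 0 with rfl | hv0
  · simp only [norm_zero]
    exact sub_nonneg.2 (isMinOn_iff.mp hmin _ hzmax)
  · have hvn : (0 : ℝ) < ‖v‖ := norm_pos_iff.2 hv0
    set u : En n := ‖v‖⁻¹ • v with hu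
    have hun : ‖u‖ = 1 := by
      rw [hu, norm_smul, norm_inv, norm_norm, inv_mul_cancel₀ hvn.ne']
    have hxu : x + u ∈ closedBall (0 : En n) (R + 1) := by
      rw [mem_closedBall_zero_iff]
      calc ‖x + u‖ ≤ ‖x‖ + ‖u‖ := norm_add_le _ _
        _ ≤ R + 1 := by rw [hun]; linarith
    have h1 : f x + ⟪v, (x + u) - x⟫ ≤ f (x + u) := hv (x + u)
    have h2 : ⟪v, u⟫ = ‖v‖ := by
      rw [hu, real_inner_smul_right, real_inner_self_eq_norm_mul_norm]
      field_simp
    have h3 : f (x + u) ≤ f zmax := isMaxOn_iff.mp hmax _ hxu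
    have h4 : f zmin ≤ f x := isMinOn_iff.mp hmin _ (by
      rw [mem_closedBall_zero_iff]; linarith)
    have h5 : (x + u) - x = u := add_sub_cancel_left x u
    rw [h5, h2] at h1
    linarith

namespace CP1

variable (D : CP1 n m m₁)

lemma tail_nonneg (hA2 : D.A2) (p : Fin m) (k : ℕ) : 0 ≤ D.tail p k :=
  tsum_nonneg fun j => hA2.1 p (k + j)

lemma tail_succ (hA2 : D.A2) (p : Fin m) (k : ℕ) :
    D.tail p k = D.αh p k + D.tail p (k + 1) := by
  have hs : Summable (fun j => D.αh p (k + j)) :=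
    ((summable_nat_add_iff k).2 (hA2.2.1 p)).congr (by intro j; rw [add_comm])
  have h0 : D.tail p k = D.αh p (k + 0) + ∑' j, D.αh p (k + (j + 1)) :=
    Summable.tsum_eq_zero_add hs
  rw [h0, add_zero]
  congr 1
  unfold tail
  apply tsum_congr
  intro j
  congr 1
  omega

lemma Fupper_ge (hiter : D.IterOK) (p : Fin m) (k i : ℕ) (x : En n) :
    D.fk p k x + D.tail p k ≤ D.Fupper p k i x := by
  have ha := (hiter.2.1 p k i).1 x
  unfold Fupper fk at *
  linarith

lemma Flower_le (hiter : D.IterOK) (p : Fin m) (k i : ℕ) (x : En n) :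
    D.Flower p k i x ≤ D.fk p k x := by
  have hb := (hiter.2.1 p k i).2 x
  unfold Flower fk at *
  linarith

lemma Fupper_base (p : Fin m) (k i : ℕ) :
    D.Fupper p k i (D.X k i) = D.fk p k (D.X k i) + D.tail p k := by
  unfold Fupper fk
  rw [sub_self, inner_zero_right]
  ring

lemma Flower_base (p : Fin m) (k i : ℕ) :
    D.Flower p k i (D.X k i) = D.fk p k (D.X k i) := by
  unfold Flower fk
  rw [sub_self, inner_zero_right]
  ring

lemma mem_cons (hA2 : D.A2) (k i : ℕ)
    (hb : ∀ p : Fin m, m₁ ≤ (p : ℕ) → D.fk p k (D.X k i) ≤ -D.tail p k) :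
    D.X k i ∈ D.Cons k i := by
  intro p hp
  rw [D.Fupper_base p k i]
  have := hb p hp
  linarith

lemma feas_main (hA2 : D.A2) (hiter : D.IterOK) :
    ∀ k i : ℕ, ∀ p : Fin m, m₁ ≤ (p : ℕ) → D.fk p k (D.X k i) ≤ -D.tail p k := by
  have step : ∀ k i : ℕ,
      (∀ p : Fin m, m₁ ≤ (p : ℕ) → D.fk p k (D.X k i) ≤ -D.tail p k) →
      (∀ p : Fin m, m₁ ≤ (p : ℕ) → D.fk p k (D.X k (i + 1)) ≤ -D.tail p k) := by
    intro k i hb p hp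
    have hne : (D.Cons k i).Nonempty := ⟨D.X k i, D.mem_cons hA2 k i hb⟩
    have hmem := (hiter.2.2.1 k i hne).1 p hp
    have := D.Fupper_ge hiter p k i (D.X k (i + 1))
    linarith
  have inner : ∀ k : ℕ,
      (∀ p : Fin m, m₁ ≤ (p : ℕ) → D.fk p k (D.X k 0) ≤ -D.tail p k) →
      ∀ i : ℕ, ∀ p : Fin m, m₁ ≤ (p : ℕ) → D.fk p k (D.X k i) ≤ -D.tail p k := by
    intro k h0 i
    induction i with
    | zero => exact h0
    | succ i ih => exact step k i ih
  have main : ∀ k : ℕ,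
      ∀ i : ℕ, ∀ p : Fin m, m₁ ≤ (p : ℕ) → D.fk p k (D.X k i) ≤ -D.tail p k := by
    intro k
    induction k with
    | zero =>
      apply inner
      intro p hp
      rw [hiter.1]
      have h1 := hA2.2.2.2.2 p hp
      have h2 : D.tail p 0 = ∑' j, D.αh p j := by
        unfold tail
        exact tsum_congr fun j => by rw [zero_add]
      rw [h2]
      exact h1
    | succ k ih =>
      apply inner
      intro p hp
      rw [hiter.2.2.2 k]
      have hXf : D.X k (D.iK k) ∈ D.Xfeas k := by
        intro q hq
        have := ih (D.iK k) q hq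
        have := D.tail_nonneg hA2 q k
        linarith
      have hdecr := hA2.2.2.2.1 p hp k (D.X k (D.iK k)) hXf
      have hik := ih (D.iK k) p hp
      have hts := D.tail_succ hA2 p k
      linarith
  exact main

lemma stop_exists (hφ : D.PhiOK) (hdec : D.DecompOK) (hA1 : D.A1) (hA2 : D.A2)
    (hA3 : D.A3) (hA4 : D.A4) (hpar : D.ParamsOK) (hiter : D.IterOK) (k : ℕ) :
    ∃ i, D.Stop k i := by
  classical
  have lam_pos : 0 < D.lam := hpar.1
  have eps_pos : 0 < D.eps k := (hpar.2.1 k).1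
  have del_pos : 0 < D.del k := (hpar.2.1 k).2
  have ell_pos : 0 < D.ell k := (hA3 k).1
  -- finiteness of the monotone decomposition for p < m₁
  have hfin : ∀ p : Fin m, (p : ℕ) < m₁ → ∀ t : ℝ,
      D.φu p t ≠ ⊤ ∧ D.φu p t ≠ ⊥ ∧ D.φd p t ≠ ⊤ ∧ D.φd p t ≠ ⊥ := by
    intro p hp t
    obtain ⟨hpu, -, -, -, hpd, -, -, -, hsum, -⟩ := hdec p
    have hne := (hφ.1 p hp).1 t
    have hub := hpu.2 t
    have hdb := hpd.2 t
    refine ⟨?_, hub, ?_, hdb⟩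
    · intro htop
      exact hne.1 (by rw [hsum t, htop, EReal.top_add_of_ne_bot hdb])
    · intro htop
      exact hne.1 (by rw [hsum t, htop, EReal.add_top_of_ne_bot hub])
  have hmonoU : ∀ p : Fin m, Monotone (D.φu p) := fun p => (hdec p).2.2.2.1
  have hantiD : ∀ p : Fin m, Antitone (D.φd p) := fun p => (hdec p).2.2.2.2.2.2.2.1
  have hsumφ : ∀ p : Fin m, ∀ t, D.φ p t = D.φu p t + D.φd p t :=
    fun p => (hdec p).2.2.2.2.2.2.2.2.1
  -- continuity of g, h, fk
  have hconts : ∀ p : Fin m, Continuous (D.g p k) ∧ Continuous (D.h p k) := by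
    intro p
    obtain ⟨hg, hh⟩ := (hA1 p).1 k
    exact ⟨continuousOn_univ.mp (hg.continuousOn isOpen_univ),
      continuousOn_univ.mp (hh.continuousOn isOpen_univ)⟩
  have hfk_cont : ∀ p : Fin m, Continuous (D.fk p k) :=
    fun p => (hconts p).1.sub (hconts p).2
  -- φ is a coercion of its real part for p < m₁ and the real part is convex, continuous
  have hφcoe : ∀ p : Fin m, (p : ℕ) < m₁ → ∀ t,
      D.φ p t = (((D.φ p t).toReal : ℝ) : EReal) :=
    fun p hp t => (EReal.coe_toReal ((hφ.1 p hp).1 t).1 ((hφ.1 p hp).1 t).2).symm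
  have hφR_conv : ∀ p : Fin m, (p : ℕ) < m₁ →
      ConvexOn ℝ (univ : Set ℝ) (fun t => (D.φ p t).toReal) := by
    intro p hp
    refine ⟨convex_univ, ?_⟩
    intro s _ t _ a b ha hb hab
    simp only [smul_eq_mul]
    have h := (hφ.1 p hp).2 s t a b ha hb hab
    rw [hφcoe p hp s, hφcoe p hp t, ← EReal.coe_mul, ← EReal.coe_mul,
      ← EReal.coe_add] at h
    have h2 := EReal.toReal_le_toReal h ((hφ.1 p hp).1 _).2 (EReal.coe_ne_top _)
    rwa [EReal.toReal_coe] at h2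
  have hφR_cont : ∀ p : Fin m, (p : ℕ) < m₁ →
      Continuous (fun t => (D.φ p t).toReal) := fun p hp =>
    continuousOn_univ.mp ((hφR_conv p hp).continuousOn isOpen_univ)
  -- feasibility facts
  have hfeas := D.feas_main hA2 hiter
  have htail := D.tail_nonneg hA2
  have hmemc : ∀ i, D.X k i ∈ D.Cons k i :=
    fun i => D.mem_cons hA2 k i (fun p hp => hfeas k i p hp)
  have hconsne : ∀ i, (D.Cons k i).Nonempty := fun i => ⟨_, hmemc i⟩
  -- the real objective values
  set r : ℕ → ℝ := fun i => ∑ p : Fin m, if (p : ℕ) < m₁ then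
      (D.φu p (D.fk p k (D.X k i) + D.tail p k)).toReal
        + (D.φd p (D.fk p k (D.X k i))).toReal else 0 with hrdef
  have hrcoe : ∀ i, ((r i : ℝ) : EReal) = ∑ p : Fin m, ((if (p : ℕ) < m₁ then
      (D.φu p (D.fk p k (D.X k i) + D.tail p k)).toReal
        + (D.φd p (D.fk p k (D.X k i))).toReal else 0 : ℝ) : EReal) :=
    fun i => ereal_coe_sum _ _
  have hObj_base : ∀ i, D.Obj k i (D.X k i) = ((r i : ℝ) : EReal) := by
    intro i
    have h0 : ((D.lam / 2 * ‖D.X k i - D.X k i‖ ^ 2 : ℝ) : EReal) = (0 : EReal) := by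
      rw [sub_self, norm_zero]
      norm_num
    unfold Obj
    rw [h0, add_zero, hrcoe i]
    apply Finset.sum_congr rfl
    intro p _
    by_cases hp : (p : ℕ) < m₁
    · simp only [if_pos hp]
      rw [D.Fupper_base p k i, D.Flower_base p k i, EReal.coe_add,
        EReal.coe_toReal (hfin p hp _).1 (hfin p hp _).2.1,
        EReal.coe_toReal (hfin p hp _).2.2.1 (hfin p hp _).2.2.2]
    · simp only [if_neg hp, EReal.coe_zero]
  have hObj_ge : ∀ i,
      ((r (i + 1) + D.lam / 2 * ‖D.X k (i + 1) - D.X k i‖ ^ 2 : ℝ) : EReal)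
        ≤ D.Obj k i (D.X k (i + 1)) := by
    intro i
    rw [EReal.coe_add]
    unfold Obj
    apply add_le_add _ le_rfl
    rw [hrcoe (i + 1)]
    apply Finset.sum_le_sum
    intro p _
    by_cases hp : (p : ℕ) < m₁
    · simp only [if_pos hp]
      rw [EReal.coe_add,
        EReal.coe_toReal (hfin p hp _).1 (hfin p hp _).2.1,
        EReal.coe_toReal (hfin p hp _).2.2.1 (hfin p hp _).2.2.2]
      exact add_le_add (hmonoU p (D.Fupper_ge hiter p k i _))
        (hantiD p (D.Flower_le hiter p k i _))
    · simp only [if_neg hp, EReal.coe_zero, le_refl]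
  have hmin : ∀ i, D.Obj k i (D.X k (i + 1)) ≤ D.Obj k i (D.X k i) :=
    fun i => (hiter.2.2.1 k i (hconsne i)).2 _ (hmemc i)
  have hrec : ∀ i, r (i + 1) + D.lam / 2 * ‖D.X k (i + 1) - D.X k i‖ ^ 2 ≤ r i := by
    intro i
    have h := (hObj_ge i).trans ((hmin i).trans_eq (hObj_base i))
    exact_mod_cast h
  have hcnn : ∀ i, 0 ≤ D.lam / 2 * ‖D.X k (i + 1) - D.X k i‖ ^ 2 := by
    intro i
    positivity
  have hr_anti : Antitone r := antitone_nat_of_succ_le fun i => by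
    have := hrec i; have := hcnn i; linarith
  -- boundedness of the iterates
  have hlev : ∀ i, (∑ p : Fin m, D.φ p (D.fk p k (D.X k i))) ≤ ((r 0 : ℝ) : EReal) := by
    intro i
    have h1 : (∑ p : Fin m, D.φ p (D.fk p k (D.X k i))) ≤ ((r i : ℝ) : EReal) := by
      rw [hrcoe i]
      apply Finset.sum_le_sum
      intro p _
      by_cases hp : (p : ℕ) < m₁
      · simp only [if_pos hp]
        rw [EReal.coe_add,
          EReal.coe_toReal (hfin p hp _).1 (hfin p hp _).2.1,
          EReal.coe_toReal (hfin p hp _).2.2.1 (hfin p hp _).2.2.2,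
          hsumφ p _]
        exact add_le_add (hmonoU p (le_add_of_nonneg_right (htail p k))) le_rfl
      · simp only [if_neg hp, EReal.coe_zero]
        have hple : m₁ ≤ (p : ℕ) := le_of_not_gt hp
        have h0 : D.fk p k (D.X k i) ≤ 0 := by
          have := hfeas k i p hple
          have := htail p k
          linarith
        rw [congrFun (hφ.2 p hple) (D.fk p k (D.X k i)), if_pos h0]
    exact h1.trans (EReal.coe_le_coe_iff.2 (hr_anti (Nat.zero_le i)))
  obtain ⟨R1, hR1⟩ := isBounded_iff_forall_norm_le.mp (hA4 k (r 0))
  set R0 : ℝ := max R1 0 with hR0def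
  have hR0 : 0 ≤ R0 := le_max_right _ _
  have hxR : ∀ i, ‖D.X k i‖ ≤ R0 := fun i => (hR1 _ (hlev i)).trans (le_max_left _ _)
  -- lower bound on r
  have hFun_cont : Continuous (fun y : En n =>
      ∑ p : Fin m, if (p : ℕ) < m₁ then (D.φ p (D.fk p k y)).toReal else 0) := by
    apply continuous_finset_sum
    intro p _
    by_cases hp : (p : ℕ) < m₁
    · simp only [if_pos hp]
      exact (hφR_cont p hp).comp (hfk_cont p)
    · simp only [if_neg hp]
      exact continuous_const
  obtain ⟨z, hz, hminz⟩ := (isCompact_closedBall (0 : En n) R0).exists_isMinOn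
    ⟨0, mem_closedBall_self hR0⟩ hFun_cont.continuousOn
  set B : ℝ := ∑ p : Fin m, if (p : ℕ) < m₁ then (D.φ p (D.fk p k z)).toReal else 0
    with hBdef
  have hlow : ∀ i, B ≤ r i := by
    intro i
    have h1 : B ≤ ∑ p : Fin m,
        if (p : ℕ) < m₁ then (D.φ p (D.fk p k (D.X k i))).toReal else 0 :=
      isMinOn_iff.mp hminz _ (mem_closedBall_zero_iff.2 (hxR i))
    refine h1.trans ?_
    apply Finset.sum_le_sum
    intro p _
    by_cases hp : (p : ℕ) < m₁
    · simp only [if_pos hp]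
      rw [hsumφ p _, EReal.toReal_add (hfin p hp _).1 (hfin p hp _).2.1
        (hfin p hp _).2.2.1 (hfin p hp _).2.2.2]
      refine add_le_add ?_ le_rfl
      exact EReal.toReal_le_toReal
        (hmonoU p (le_add_of_nonneg_right (htail p k)))
        (hfin p hp _).2.1 (hfin p hp _).1
    · simp only [if_neg hp, le_refl]
  -- summability of the proximal terms and vanishing steps
  have hpart : ∀ N, ∑ i ∈ Finset.range N,
      D.lam / 2 * ‖D.X k (i + 1) - D.X k i‖ ^ 2 ≤ r 0 - B := by
    have key : ∀ N, r N + ∑ i ∈ Finset.range N,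
        D.lam / 2 * ‖D.X k (i + 1) - D.X k i‖ ^ 2 ≤ r 0 := by
      intro N
      induction N with
      | zero => simp
      | succ N ih =>
        rw [Finset.sum_range_succ]
        have := hrec N
        linarith
    intro N
    have h1 := key N
    have h2 := hlow N
    linarith
  have hsummc : Summable (fun i => D.lam / 2 * ‖D.X k (i + 1) - D.X k i‖ ^ 2) :=
    summable_of_sum_range_le hcnn hpart
  have hc0 := hsummc.tendsto_atTop_zero
  have hsq : Tendsto (fun i => ‖D.X k (i + 1) - D.X k i‖ ^ 2) atTop (nhds 0) := by
    have h := hc0.const_mul (2 / D.lam)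
    rw [mul_zero] at h
    refine h.congr fun i => ?_
    field_simp
  have hd0 : Tendsto (fun i => ‖D.X k (i + 1) - D.X k i‖) atTop (nhds 0) := by
    have h := (Real.continuous_sqrt.tendsto 0).comp hsq
    rw [Real.sqrt_zero] at h
    refine h.congr fun i => ?_
    simp [Real.sqrt_sq (norm_nonneg _)]
  -- vanishing of linearization gaps
  have hUC : ∀ F : En n → ℝ, Continuous F →
      Tendsto (fun i => F (D.X k (i + 1)) - F (D.X k i)) atTop (nhds 0) := by
    intro F hF
    rw [Metric.tendsto_atTop]
    intro ε hε
    have hucon := (isCompact_closedBall (0 : En n) R0).uniformContinuousOn_of_continuous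
      hF.continuousOn
    rw [Metric.uniformContinuousOn_iff] at hucon
    obtain ⟨δ, hδ, hδ'⟩ := hucon ε hε
    have hd0' := hd0
    rw [Metric.tendsto_atTop] at hd0'
    obtain ⟨N, hN⟩ := hd0' δ hδ
    refine ⟨N, fun i hi => ?_⟩
    have h1 : dist (D.X k (i + 1)) (D.X k i) < δ := by
      rw [dist_eq_norm]
      have h2 := hN i hi
      rwa [Real.dist_eq, sub_zero, abs_of_nonneg (norm_nonneg _)] at h2
    have h2 := hδ' _ (mem_closedBall_zero_iff.2 (hxR (i + 1)))
      _ (mem_closedBall_zero_iff.2 (hxR i)) h1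
    rw [Real.dist_eq, sub_zero]
    rwa [Real.dist_eq] at h2
  have hinner0 : ∀ (v : ℕ → En n) (K : ℝ), (∀ i, ‖v i‖ ≤ K) →
      Tendsto (fun i => (⟪v i, D.X k (i + 1) - D.X k i⟫ : ℝ)) atTop (nhds 0) := by
    intro v K hK
    apply squeeze_zero_norm (a := fun i => K * ‖D.X k (i + 1) - D.X k i‖)
    · intro i
      rw [Real.norm_eq_abs]
      calc |(⟪v i, D.X k (i + 1) - D.X k i⟫ : ℝ)|
          ≤ ‖v i‖ * ‖D.X k (i + 1) - D.X k i‖ := abs_real_inner_le_norm _ _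
        _ ≤ K * ‖D.X k (i + 1) - D.X k i‖ :=
            mul_le_mul_of_nonneg_right (hK i) (norm_nonneg _)
    · simpa using hd0.const_mul K
  have hev1 : ∀ p : Fin m, ∀ᶠ i in atTop,
      D.Fupper p k i (D.X k (i + 1))
        ≤ D.fk p k (D.X k (i + 1)) + D.tail p k + D.eps k := by
    intro p
    obtain ⟨K, hK0, hK⟩ := subgrad_norm_bound (hconts p).2 hR0
    have hKa : ∀ i, ‖D.aSel p k i‖ ≤ K :=
      fun i => hK _ (hxR i) _ (hiter.2.1 p k i).1
    have herr : Tendsto (fun i => D.h p k (D.X k (i + 1)) - D.h p k (D.X k i)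
        - ⟪D.aSel p k i, D.X k (i + 1) - D.X k i⟫) atTop (nhds 0) := by
      have h := (hUC _ (hconts p).2).sub (hinner0 _ K hKa)
      simpa using h
    filter_upwards [herr.eventually_lt_const eps_pos] with i hi
    have hident : D.Fupper p k i (D.X k (i + 1))
        - (D.fk p k (D.X k (i + 1)) + D.tail p k)
        = D.h p k (D.X k (i + 1)) - D.h p k (D.X k i)
          - ⟪D.aSel p k i, D.X k (i + 1) - D.X k i⟫ := by
      unfold Fupper fk
      ring
    linarith [hident.le, hident.ge]
  have hev2 : ∀ p : Fin m, ∀ᶠ i in atTop,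
      D.fk p k (D.X k (i + 1)) - D.eps k ≤ D.Flower p k i (D.X k (i + 1)) := by
    intro p
    obtain ⟨K, hK0, hK⟩ := subgrad_norm_bound (hconts p).1 hR0
    have hKb : ∀ i, ‖D.bSel p k i‖ ≤ K :=
      fun i => hK _ (hxR i) _ (hiter.2.1 p k i).2
    have herr : Tendsto (fun i => D.g p k (D.X k (i + 1)) - D.g p k (D.X k i)
        - ⟪D.bSel p k i, D.X k (i + 1) - D.X k i⟫) atTop (nhds 0) := by
      have h := (hUC _ (hconts p).1).sub (hinner0 _ K hKb)
      simpa using h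
    filter_upwards [herr.eventually_lt_const eps_pos] with i hi
    have hident : D.fk p k (D.X k (i + 1)) - D.Flower p k i (D.X k (i + 1))
        = D.g p k (D.X k (i + 1)) - D.g p k (D.X k i)
          - ⟪D.bSel p k i, D.X k (i + 1) - D.X k i⟫ := by
      unfold Flower fk
      ring
    linarith [hident.le, hident.ge]
  have hev3 : ∀ᶠ i in atTop,
      ‖D.X k (i + 1) - D.X k i‖ ≤ D.del k / (D.lam + D.ell k) :=
    (hd0.eventually_lt_const (div_pos del_pos (add_pos lam_pos ell_pos))).mono
      fun i hi => hi.le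
  obtain ⟨i, h1, h2, h3⟩ :=
    ((eventually_all.2 hev1).and ((eventually_all.2 hev2).and hev3)).exists
  exact ⟨i, h1, fun p _ => h2 p, h3⟩

end CP1

end AuxProof

/-- convergence of the inner loop of the prox-ADC method.
Under Assumptions 1–4: (a) the strongly convex subproblem defining `x^{k,i+1}` is feasible
for every `k, i`; and (b) for every `k` the inner stopping rule is achieved in finitely many
steps, i.e. there exists an index `i` satisfying the stopping conditions (so the smallest
such index `i_k` is finite). -/
theorem stmt9 {n m m₁ : ℕ} (D : CP1 n m m₁) (hm : m₁ ≤ m)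
    (hφ : D.PhiOK)
    (hφconv : ∀ p, Proper1 (D.φ p) ∧ LowerSemicontinuous (D.φ p) ∧ EConvex1 (D.φ p))
    (hdec : D.DecompOK)
    (hA1 : D.A1) (hA2 : D.A2) (hA3 : D.A3) (hA4 : D.A4)
    (hpar : D.ParamsOK) (hiter : D.IterOK)
    (hiK : ∀ k i, D.Stop k i → D.Stop k (D.iK k) ∧ D.iK k ≤ i) :
    (∀ k i : ℕ, (D.Cons k i).Nonempty) ∧ (∀ k : ℕ, ∃ i : ℕ, D.Stop k i) := by
  constructor
  · intro k i
    exact ⟨D.X k i, D.mem_cons hA2 k i fun p hp => D.feas_main hA2 hiter k i p hp⟩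
  · intro k
    exact D.stop_exists hφ hdec hA1 hA2 hA3 hA4 hpar hiter k
end
end
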